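/- arXiv:2107.00550 — 6 statements merged into one kernel-verified Lean document; each statement's English description precedes it below -/
import Mathlib

section
/- Suppose V is a good homogeneous ssee. Then for every hereditary property P of [0,1]-decorations of V, the sequence ex(V_n, P_n)/|V_n| is non-decreasing in n (with values in ℝ_{≥0} ∪ {∞}); in particular this sequence either converges to a limit π(P) or tends to infinity as n → ∞. -/
open MeasureTheory Filter Set

noncomputable section

/-- A set-sequence equipped with embeddings (ssee): a sequence of finite nonempty
sets `V n` together with, for `N ≤ n`, a collection of injections `V N → V n`. -/
structure Ssee where
  V : ℕ → Type
  fin : ∀ n, Fintype (V n)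
  dec : ∀ n, DecidableEq (V n)
  nonemp : ∀ n, Nonempty (V n)
  emb : (N n : ℕ) → Finset (V N → V n)
  emb_inj : ∀ N n, N ≤ n → ∀ φ ∈ emb N n, Function.Injective φ

attribute [instance] Ssee.fin Ssee.dec Ssee.nonemp

/-- `I(N,n)`: the number of pairs of embeddings whose images intersect in exactly `i`
elements, summed over all `i` with `1 < i < |V_N|`. -/
def Ssee.interCount (S : Ssee) (N n : ℕ) : ℕ :=
  ((S.emb N n ×ˢ S.emb N n).filter (fun p =>
    1 < ((Finset.univ.image p.1) ∩ (Finset.univ.image p.2)).card ∧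
    ((Finset.univ.image p.1) ∩ (Finset.univ.image p.2)).card < Fintype.card (S.V N))).card

/-- A ssee is good if `|V_n| → ∞`, and for every `N` with `|V_N| > 1` we have
`|emb N n| / |V_n| → ∞` and `|V_n| · I(N,n) / |emb N n|² → 0`. -/
def Ssee.Good (S : Ssee) : Prop :=
  Tendsto (fun n => Fintype.card (S.V n)) atTop atTop ∧
  (∀ N, 1 < Fintype.card (S.V N) →
    Tendsto (fun n => ((S.emb N n).card : ℝ) / (Fintype.card (S.V n) : ℝ)) atTop atTop) ∧
  (∀ N, 1 < Fintype.card (S.V N) →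
    Tendsto (fun n => ((Fintype.card (S.V n) : ℝ) * (S.interCount N n : ℝ)) /
      ((S.emb N n).card : ℝ) ^ 2) atTop (nhds 0))

/-- Homogeneous: every point of `V n` lies in the same strictly positive number of
images of embeddings of `V N`. -/
def Ssee.Homogeneous (S : Ssee) : Prop :=
  ∀ N n, N ≤ n → ∃ k : ℕ, 0 < k ∧ ∀ x : S.V n,
    ((S.emb N n).filter (fun φ => x ∈ Finset.univ.image φ)).card = k

/-- The unit cube `[0,1]^ι`. -/
def unitCube (ι : Type) : Set (ι → ℝ) := Set.univ.pi fun _ => Set.Icc (0:ℝ) 1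

/-- A box in `[0,1]^ι`: a product of measurable subsets of `[0,1]`. -/
def IsBox {ι : Type} (b : Set (ι → ℝ)) : Prop :=
  ∃ A : ι → Set ℝ, (∀ i, MeasurableSet (A i) ∧ A i ⊆ Set.Icc 0 1) ∧ b = Set.univ.pi A

/-- A simple box: a product of finite unions of intervals (i.e. of order-connected
subsets of `ℝ`) contained in `[0,1]`. -/
def IsSimpleBox {ι : Type} (b : Set (ι → ℝ)) : Prop :=
  ∃ A : ι → Set ℝ,
    (∀ i, A i ⊆ Set.Icc 0 1 ∧
      ∃ s : Finset (Set ℝ), (∀ J ∈ s, J.OrdConnected) ∧ A i = ⋃₀ ↑s) ∧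
    b = Set.univ.pi A

/-- The projection `b_{↓φ}` of a body `b ⊆ [0,1]^β` along `φ : α → β`: those `c` whose
fiber (in the coordinates outside the range of `φ`) has positive measure. -/
def projBody {α β : Type} [Fintype α] [Fintype β] (φ : α → β) (b : Set (β → ℝ)) :
    Set (α → ℝ) :=
  letI : ∀ p : Prop, Decidable p := fun p => Classical.propDecidable p
  {c | 0 < volume {d : {i : β // i ∉ Set.range φ} → ℝ |
    (fun i : β => if h : i ∈ Set.range φ then c h.choose else d ⟨i, h⟩) ∈ b}}

/-- The lift `b_{↑φ}` of a body `b ⊆ [0,1]^α` along `φ : α → β`. -/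
def liftBody {α β : Type} (φ : α → β) (b : Set (α → ℝ)) : Set (β → ℝ) :=
  {c | c ∈ unitCube β ∧ (fun j => c (φ j)) ∈ b}

/-- The upper shadow `∂⁺_{V_n}(b)` of a body `b ⊆ [0,1]^{V_N}`. -/
def Ssee.upperShadow (S : Ssee) (N n : ℕ) (b : Set (S.V N → ℝ)) : Set (S.V n → ℝ) :=
  ⋃ φ ∈ S.emb N n, liftBody φ b

/-- A hereditary `[0,1]`-decoration property: a sequence of measurable subsets of the
unit cubes whose complements (within the cubes) are closed under upper shadows. -/
def Ssee.Hereditary (S : Ssee) (P : ∀ n, Set (S.V n → ℝ)) : Prop :=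
  (∀ n, MeasurableSet (P n) ∧ P n ⊆ unitCube (S.V n)) ∧
  ∀ N n, N ≤ n → S.upperShadow N n (unitCube (S.V N) \ P N) ⊆ unitCube (S.V n) \ P n

/-- Expectation of `f φ` over an embedding `φ` chosen uniformly from `emb N n`. -/
def Ssee.expProj (S : Ssee) (N n : ℕ) (f : (S.V N → S.V n) → ℝ) : ℝ :=
  (∑ φ ∈ S.emb N n, f φ) / ((S.emb N n).card : ℝ)

/-- The entropy `Ent(b) = -log vol(b)`, valued in `EReal` (so `Ent(b) = ⊤` when
`vol(b) = 0`). -/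
def entE {ι : Type} [Fintype ι] (b : Set (ι → ℝ)) : EReal := -(ENNReal.log (volume b))

/-- Extremal entropy `ex(V_n, P_n) = inf { Ent(b) : b a box with vol(b \ P_n) = 0 }`. -/
def Ssee.exEnt (S : Ssee) (P : ∀ n, Set (S.V n → ℝ)) (n : ℕ) : EReal :=
  sInf {e : EReal | ∃ b : Set (S.V n → ℝ), IsBox b ∧ volume (b \ P n) = 0 ∧ e = entE b}


section Aux

lemma volume_unitCube (ι : Type) [Fintype ι] : volume (unitCube ι) = 1 := by
  rw [unitCube, volume_pi_pi]
  simp [Real.volume_Icc]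

lemma box_subset_unitCube {ι : Type} [Fintype ι] {A : ι → Set ℝ}
    (hA : ∀ i, A i ⊆ Set.Icc 0 1) : Set.univ.pi A ⊆ unitCube ι := by
  intro x hx i _
  exact hA i (hx i (Set.mem_univ i))

lemma entE_nonneg_of_box {ι : Type} [Fintype ι] {b : Set (ι → ℝ)} (hb : IsBox b) :
    0 ≤ entE b := by
  obtain ⟨A, hA, rfl⟩ := hb
  have h1 : volume (Set.univ.pi A) ≤ 1 := by
    rw [← volume_unitCube ι]
    exact measure_mono (box_subset_unitCube fun i => (hA i).2)
  have hlog : ENNReal.log (volume (Set.univ.pi A)) ≤ 0 := ENNReal.log_le_zero_iff.2 h1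
  have := EReal.neg_le_neg_iff.2 hlog
  simpa [entE] using this

lemma exEnt_nonneg (S : Ssee) (P : ∀ n, Set (S.V n → ℝ)) (n : ℕ) : 0 ≤ S.exEnt P n := by
  refine le_sInf ?_
  rintro e ⟨b, hb, -, rfl⟩
  exact entE_nonneg_of_box hb

lemma entE_pi_eq {ι : Type} [Fintype ι] (B : ι → Set ℝ)
    (h0 : ∀ i, volume (B i) ≠ 0) (ht : ∀ i, volume (B i) ≠ ⊤) :
    entE (Set.univ.pi B) = ((∑ i, -Real.log (volume (B i)).toReal : ℝ) : EReal) := by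
  have h0' : (∏ i, volume (B i)) ≠ 0 := Finset.prod_ne_zero_iff.2 fun i _ => h0 i
  have ht' : (∏ i, volume (B i)) ≠ ⊤ := ENNReal.prod_ne_top fun i _ => ht i
  rw [entE, volume_pi_pi, ENNReal.log_pos_real h0' ht', ENNReal.toReal_prod,
    Real.log_prod (fun i _ => ENNReal.toReal_ne_zero.2 ⟨h0 i, ht i⟩), ← EReal.coe_neg]
  congr 1
  rw [← Finset.sum_neg_distrib]

/-- Counting via homogeneity. -/
lemma hom_sum (S : Ssee) {N n : ℕ} (hNn : N ≤ n) {k : ℕ}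
    (hkcount : ∀ x : S.V n,
      ((S.emb N n).filter (fun φ => x ∈ Finset.univ.image φ)).card = k)
    (F : S.V n → ℝ) :
    ∑ φ ∈ S.emb N n, ∑ j, F (φ j) = k * ∑ x, F x := by
  classical
  calc ∑ φ ∈ S.emb N n, ∑ j, F (φ j)
      = ∑ φ ∈ S.emb N n, ∑ x ∈ Finset.univ.image φ, F x := by
        refine Finset.sum_congr rfl fun φ hφ => ?_
        rw [Finset.sum_image (fun a _ b _ h => S.emb_inj N n hNn φ hφ h)]
    _ = ∑ φ ∈ S.emb N n, ∑ x : S.V n, if x ∈ Finset.univ.image φ then F x else 0 := by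
        refine Finset.sum_congr rfl fun φ _ => ?_
        rw [Finset.sum_ite_mem, Finset.univ_inter]
    _ = ∑ x : S.V n, ∑ φ ∈ S.emb N n, if x ∈ Finset.univ.image φ then F x else 0 :=
        Finset.sum_comm
    _ = ∑ x : S.V n, (((S.emb N n).filter (fun φ => x ∈ Finset.univ.image φ)).card : ℝ) * F x := by
        refine Finset.sum_congr rfl fun x _ => ?_
        rw [← Finset.sum_filter, Finset.sum_const, nsmul_eq_mul]
    _ = ∑ x : S.V n, (k : ℝ) * F x := by
        refine Finset.sum_congr rfl fun x _ => ?_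
        rw [hkcount x]
    _ = k * ∑ x, F x := by rw [← Finset.mul_sum]

end Aux

/-- Key lemma: if a box `∏ A` is almost contained in `P n` and all `A i` have positive
volume, then for every embedding `φ` the projected box is almost contained in `P N`. -/
lemma proj_vol_zero (S : Ssee) {N n : ℕ} (hNn : N ≤ n)
    (P : ∀ m, Set (S.V m → ℝ)) (hP : S.Hereditary P)
    {A : S.V n → Set ℝ} (hA : ∀ i, MeasurableSet (A i) ∧ A i ⊆ Set.Icc 0 1)
    (hAne : ∀ i, volume (A i) ≠ 0)
    (hvol0 : volume (Set.univ.pi A \ P n) = 0)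
    {φ : S.V N → S.V n} (hφ : φ ∈ S.emb N n) :
    volume (Set.univ.pi (fun j => A (φ j)) \ P N) = 0 := by
  classical
  have hinj : Function.Injective φ := S.emb_inj N n hNn φ hφ
  set p : S.V n → Prop := fun i => i ∈ Set.range φ with hp
  set bφ : Set (S.V N → ℝ) := Set.univ.pi (fun j => A (φ j)) with hbφ
  have hbφmeas : MeasurableSet (bφ \ P N) :=
    (MeasurableSet.univ_pi (fun j => (hA (φ j)).1)).diff (hP.1 N).1
  set eα : S.V N ≃ {i // p i} := Equiv.ofInjective φ hinj with heα
  set ψ := (MeasurableEquiv.piCongrLeft (fun _ : {i // p i} => ℝ) eα).symm with hψdef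
  have hψ : ∀ (g : {i // p i} → ℝ) j, ψ g j = g (eα j) := by
    intro g j
    simp [hψdef, MeasurableEquiv.piCongrLeft, Equiv.piCongrLeft]
  set S1 : Set ({i // p i} → ℝ) := ψ ⁻¹' (bφ \ P N) with hS1
  set S2 : Set ({i // ¬ p i} → ℝ) := Set.univ.pi (fun i => A i.1) with hS2
  set e := MeasurableEquiv.piEquivPiSubtypeProd (fun _ : S.V n => ℝ) p with he
  set D : Set (S.V n → ℝ) := e ⁻¹' (S1 ×ˢ S2) with hD
  have hcoordφ : ∀ j, ((eα j : {i // p i}) : S.V n) = φ j := by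
    intro j; rfl
  have hD_eq : ∀ d : S.V n → ℝ,
      d ∈ D ↔ ((fun j => d (φ j)) ∈ bφ \ P N ∧ ∀ i : {i // ¬ p i}, d i.1 ∈ A i.1) := by
    intro d
    have he1 : (e d).1 = fun i : {i // p i} => d i.1 := rfl
    have he2 : (e d).2 = fun i : {i // ¬ p i} => d i.1 := rfl
    have h1 : ψ (e d).1 = fun j => d (φ j) := by
      funext j
      rw [hψ, he1]
      simp [hcoordφ j]
    constructor
    · rintro ⟨hs1, hs2⟩
      refine ⟨?_, fun i => hs2 i (Set.mem_univ i)⟩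
      rw [Set.mem_preimage] at hs1
      rwa [h1] at hs1
    · rintro ⟨h1', h2'⟩
      refine ⟨?_, fun i _ => h2' i⟩
      rw [Set.mem_preimage]
      rwa [h1]
  have hDsub : D ⊆ Set.univ.pi A \ P n := by
    intro d hd
    rw [hD_eq] at hd
    obtain ⟨⟨hbφ1, hbφ2⟩, hrest⟩ := hd
    have hdpi : d ∈ Set.univ.pi A := by
      intro i _
      by_cases hpi : p i
      · obtain ⟨j, rfl⟩ := hpi
        exact hbφ1 j (Set.mem_univ j)
      · exact hrest ⟨i, hpi⟩
    have hcube : d ∈ unitCube (S.V n) := box_subset_unitCube (fun i => (hA i).2) hdpi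
    have hlift : d ∈ liftBody φ (unitCube (S.V N) \ P N) :=
      ⟨hcube, box_subset_unitCube (fun j => (hA (φ j)).2) hbφ1, hbφ2⟩
    have hsh : d ∈ S.upperShadow N n (unitCube (S.V N) \ P N) := by
      exact Set.mem_biUnion hφ hlift
    exact ⟨hdpi, (hP.2 N n hNn hsh).2⟩
  have hmeasS1 : MeasurableSet S1 := ψ.measurable hbφmeas
  have hmeasS2 : MeasurableSet S2 := MeasurableSet.univ_pi (fun i => (hA i.1).1)
  have hvolD : volume D = volume S1 * volume S2 := by
    have hmp := MeasureTheory.volume_preserving_piEquivPiSubtypeProd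
      (fun _ : S.V n => ℝ) p
    rw [hD, hmp.measure_preimage (hmeasS1.prod hmeasS2).nullMeasurableSet,
      MeasureTheory.Measure.volume_eq_prod, MeasureTheory.Measure.prod_prod]
    congr!
  have hvolD0 : volume D = 0 := measure_mono_null hDsub hvol0
  have hS2ne : volume S2 ≠ 0 := by
    rw [hS2, volume_pi_pi]
    exact Finset.prod_ne_zero_iff.2 fun i _ => hAne i.1
  have hS1z : volume S1 = 0 := by
    rcases mul_eq_zero.1 (hvolD ▸ hvolD0) with h | h
    · exact h
    · exact absurd h hS2ne
  have hmpψ : MeasureTheory.MeasurePreserving ψ volume volume :=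
    (MeasureTheory.volume_measurePreserving_piCongrLeft
      (fun _ : {i // p i} => ℝ) eα).symm _
  rw [← hmpψ.measure_preimage hbφmeas.nullMeasurableSet]
  exact hS1z

lemma exEnt_div_mono (S : Ssee) (hHom : S.Homogeneous)
    (P : ∀ m, Set (S.V m → ℝ)) (hP : S.Hereditary P) :
    Monotone (fun n => S.exEnt P n / ((Fintype.card (S.V n) : ℝ) : EReal)) := by
  intro N n hNn
  simp only
  have hcN : (0:ℝ) < (Fintype.card (S.V N) : ℝ) := by
    exact_mod_cast Fintype.card_pos
  have hcn : (0:ℝ) < (Fintype.card (S.V n) : ℝ) := by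
    exact_mod_cast Fintype.card_pos
  have hcnE : (0:EReal) < ((Fintype.card (S.V n) : ℝ) : EReal) := EReal.coe_pos.2 hcn
  have hcnT : (((Fintype.card (S.V n) : ℝ)) : EReal) ≠ ⊤ := EReal.coe_ne_top _
  rw [EReal.le_div_iff_mul_le hcnE hcnT, Ssee.exEnt]
  refine le_sInf ?_
  rintro e ⟨b, ⟨A, hA, rfl⟩, hvol0, rfl⟩
  rw [← EReal.le_div_iff_mul_le hcnE hcnT]
  by_cases hvb : volume (Set.univ.pi A) = 0
  · have htop : entE (Set.univ.pi A) = ⊤ := by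
      simp [entE, hvb]
    rw [htop, EReal.top_div_of_pos_ne_top hcnE hcnT]
    exact le_top
  -- positive-volume case
  have hAne : ∀ i, volume (A i) ≠ 0 := by
    intro i h
    exact hvb (by rw [volume_pi_pi]; exact Finset.prod_eq_zero (Finset.mem_univ i) h)
  have hAle : ∀ i, volume (A i) ≤ 1 := fun i => by
    calc volume (A i) ≤ volume (Set.Icc (0:ℝ) 1) := measure_mono (hA i).2
    _ = 1 := by simp [Real.volume_Icc]
  have hAtop : ∀ i, volume (A i) ≠ ⊤ := fun i =>
    ne_top_of_le_ne_top ENNReal.one_ne_top (hAle i)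
  obtain ⟨k, hkpos, hkcount⟩ := hHom N n hNn
  obtain ⟨x0⟩ := S.nonemp n
  have hembne : (S.emb N n).Nonempty := by
    have h1 : 0 < ((S.emb N n).filter
        (fun φ => x0 ∈ Finset.univ.image φ)).card := (hkcount x0) ▸ hkpos
    obtain ⟨φ, hφ⟩ := Finset.card_pos.1 h1
    exact ⟨φ, (Finset.mem_filter.1 hφ).1⟩
  have hcardpos : (0:ℝ) < ((S.emb N n).card : ℝ) := by
    exact_mod_cast Finset.card_pos.2 hembne
  set E : S.V n → ℝ := fun x => -Real.log (volume (A x)).toReal with hE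
  have hsum := hom_sum S hNn hkcount
  have hcard : ((S.emb N n).card : ℝ) * (Fintype.card (S.V N) : ℝ)
      = (k : ℝ) * (Fintype.card (S.V n) : ℝ) := by
    have h1 := hsum (fun _ => (1:ℝ))
    simpa [Finset.sum_const, Finset.card_univ, nsmul_eq_mul, mul_comm] using h1
  set T := ∑ φ ∈ S.emb N n, ∑ j, E (φ j) with hTdef
  have hT : T = (k:ℝ) * ∑ x, E x := hsum E
  have havg : ∃ φ ∈ S.emb N n, ∑ j, E (φ j) ≤ T / ((S.emb N n).card : ℝ) := by
    apply Finset.exists_le_of_sum_le hembne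
    rw [Finset.sum_const, nsmul_eq_mul, mul_div_cancel₀ _ hcardpos.ne']
  obtain ⟨φ, hφ, hφle⟩ := havg
  have hb1 : IsBox (Set.univ.pi fun j => A (φ j)) :=
    ⟨fun j => A (φ j), fun j => hA (φ j), rfl⟩
  have hb2 : volume (Set.univ.pi (fun j => A (φ j)) \ P N) = 0 :=
    proj_vol_zero S hNn P hP hA hAne hvol0 hφ
  have h1 : S.exEnt P N ≤ entE (Set.univ.pi fun j => A (φ j)) :=
    sInf_le ⟨_, hb1, hb2, rfl⟩
  have h2 : entE (Set.univ.pi fun j => A (φ j)) = ((∑ j, E (φ j) : ℝ) : EReal) :=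
    entE_pi_eq _ (fun j => hAne (φ j)) (fun j => hAtop (φ j))
  have h3 : entE (Set.univ.pi A) = ((∑ x, E x : ℝ) : EReal) :=
    entE_pi_eq A hAne hAtop
  have hreal : (∑ j, E (φ j))
      ≤ (Fintype.card (S.V N) : ℝ) * (∑ x, E x) / (Fintype.card (S.V n) : ℝ) := by
    refine hφle.trans ?_
    rw [hT, div_le_div_iff₀ hcardpos hcn]
    refine le_of_eq ?_
    linear_combination (-(∑ x, E x)) * hcard
  have h4 : S.exEnt P N ≤
      (((Fintype.card (S.V N) : ℝ) * (∑ x, E x) / (Fintype.card (S.V n) : ℝ) : ℝ) : EReal) :=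
    (h1.trans_eq h2).trans (EReal.coe_le_coe_iff.2 hreal)
  have h5 := EReal.div_le_div_right_of_nonneg (le_of_lt (EReal.coe_pos.2 hcN)) h4
  refine h5.trans_eq ?_
  rw [h3, ← EReal.coe_div, ← EReal.coe_div]
  norm_cast
  field_simp

/-- **Proposition (existence of limits from homogeneity).**
If `V` is a good homogeneous ssee, then for every hereditary property `P` of
`[0,1]`-decorations of `V`, the sequence `ex(V_n, P_n)/|V_n|` (valued in
`ℝ≥0 ∪ {∞} ⊆ EReal`) is non-decreasing; in particular it converges to a limit in
`EReal` (a real number or `∞`). -/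
theorem exEnt_ratio_monotone_of_homogeneous
    (S : Ssee) (hS : S.Good) (hHom : S.Homogeneous)
    (P : ∀ n, Set (S.V n → ℝ)) (hP : S.Hereditary P) :
    Monotone (fun n => S.exEnt P n / ((Fintype.card (S.V n) : ℝ) : EReal)) ∧
    (∀ n, (0 : EReal) ≤ S.exEnt P n / ((Fintype.card (S.V n) : ℝ) : EReal)) ∧
    ∃ L : EReal, Tendsto (fun n => S.exEnt P n / ((Fintype.card (S.V n) : ℝ) : EReal))
      atTop (nhds L) := by
  have hmono := exEnt_div_mono S hHom P hP
  refine ⟨hmono, fun n => EReal.div_nonneg (exEnt_nonneg S P n) ?_, ?_⟩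
  · exact EReal.coe_nonneg.2 (by positivity)
  · exact ⟨_, tendsto_atTop_iSup hmono⟩

end
end

section
/- Let c > 0 and let A, B ⊆ ℝ be Lebesgue-measurable sets of positive measure such that for Lebesgue-almost every pair (a, b) ∈ A × B one has |a − b| ≤ c. Then λ(A) + λ(B) ≤ 2c, and consequently λ(A)·λ(B) ≤ c². -/
open MeasureTheory Set

/-- **Lemma.** Let `c > 0` and let `A, B ⊆ ℝ` be measurable sets of positive measure
such that for almost every pair `(a,b) ∈ A × B` one has `|a − b| ≤ c`.  Then
`λ(A) + λ(B) ≤ 2c`, and consequently `λ(A)·λ(B) ≤ c²`. -/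
theorem measure_add_le_of_ae_close (c : ℝ) (hc : 0 < c)
    (A B : Set ℝ) (hA : MeasurableSet A) (hB : MeasurableSet B)
    (hA0 : 0 < volume A) (hB0 : 0 < volume B)
    (h : volume {p : ℝ × ℝ | p.1 ∈ A ∧ p.2 ∈ B ∧ c < |p.1 - p.2|} = 0) :
    volume A + volume B ≤ ENNReal.ofReal (2 * c) ∧
    volume A * volume B ≤ ENNReal.ofReal (c ^ 2) := by
  set S := {p : ℝ × ℝ | p.1 ∈ A ∧ p.2 ∈ B ∧ c < |p.1 - p.2|} with hS
  have hSm : MeasurableSet S := by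
    apply (hA.preimage measurable_fst).inter
    apply (hB.preimage measurable_snd).inter
    exact measurableSet_lt measurable_const (measurable_fst.sub measurable_snd).abs
  have hfub : ∀ᵐ a : ℝ, volume (Prod.mk a ⁻¹' S) = 0 := by
    have := (MeasureTheory.Measure.measure_prod_null (μ := (volume : Measure ℝ))
      (ν := (volume : Measure ℝ)) hSm).mp (by rw [← Measure.volume_eq_prod]; exact h)
    filter_upwards [this] with a ha using ha
  -- the good set
  set G := {a : ℝ | a ∈ A ∧ volume (Prod.mk a ⁻¹' S) = 0} with hG
  have hGA : volume G = volume A := by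
    have h1 : volume (A \ G) = 0 := by
      have hsub : A \ G ⊆ {a : ℝ | ¬ volume (Prod.mk a ⁻¹' S) = 0} := by
        intro a ha
        simp only [hG, mem_diff, mem_setOf_eq] at ha ⊢
        tauto
      exact measure_mono_null hsub hfub
    have h2 : G ⊆ A := fun a ha => ha.1
    calc volume G = volume (A \ (A \ G)) := by rw [diff_diff_cancel_left h2]
      _ = volume A := measure_diff_null h1
  -- for a good a, B is a.e. inside [a-c, a+c]
  have hslice : ∀ a ∈ G, volume (B \ Icc (a - c) (a + c)) = 0 := by
    intro a ha
    refine measure_mono_null ?_ ha.2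
    intro b hb
    simp only [mem_diff, mem_Icc, not_and, not_le] at hb
    refine ⟨ha.1, hb.1, ?_⟩
    rw [lt_abs]
    rcases le_or_gt (a - c) b with h1 | h1
    · exact Or.inr (by linarith [hb.2 h1])
    · exact Or.inl (by linarith)
  -- pairwise bound on good points
  have hpair : ∀ a₁ ∈ G, ∀ a₂ ∈ G, volume B ≤ ENNReal.ofReal (2 * c - |a₁ - a₂|) := by
    intro a₁ h1 a₂ h2
    have hBsub : volume (B \ (Icc (a₁ - c) (a₁ + c) ∩ Icc (a₂ - c) (a₂ + c))) = 0 := by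
      refine measure_mono_null ?_
        (measure_union_null (hslice a₁ h1) (hslice a₂ h2))
      intro b hb
      simp only [mem_diff, mem_inter_iff, not_and, mem_union] at hb ⊢
      tauto
    calc volume B
        = volume (B ∩ (Icc (a₁ - c) (a₁ + c) ∩ Icc (a₂ - c) (a₂ + c))) := by
          rw [← measure_diff_null (s := B) hBsub]
          congr 1
          ext b; simp only [mem_diff, mem_inter_iff, not_and, not_not]
          tauto
      _ ≤ volume (Icc (a₁ - c) (a₁ + c) ∩ Icc (a₂ - c) (a₂ + c)) :=
          measure_mono inter_subset_right
      _ ≤ ENNReal.ofReal (2 * c - |a₁ - a₂|) := by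
          rw [Icc_inter_Icc, Real.volume_Icc]
          apply ENNReal.ofReal_le_ofReal
          rcases abs_cases (a₁ - a₂) with ⟨he, _⟩ | ⟨he, _⟩ <;>
            simp [max_def, min_def] <;> split_ifs <;> linarith
  -- volume B is finite and positive
  have hBfin : volume B ≠ ⊤ := by
    rcases (nonempty_of_measure_ne_zero (by rw [hGA]; exact hA0.ne')) with ⟨a₀, ha₀⟩
    exact ne_top_of_le_ne_top ENNReal.ofReal_ne_top (hpair a₀ ha₀ a₀ ha₀)
  set β := (volume B).toReal with hβ
  have hβ0 : 0 < β := ENNReal.toReal_pos hB0.ne' hBfin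
  -- distance bound between good points
  have hdist : ∀ a₁ ∈ G, ∀ a₂ ∈ G, |a₁ - a₂| ≤ 2 * c - β := by
    intro a₁ h1 a₂ h2
    rcases le_or_gt 0 (2 * c - |a₁ - a₂|) with hnn | hneg
    · have := ENNReal.toReal_le_of_le_ofReal hnn (hpair a₁ h1 a₂ h2)
      linarith
    · exfalso
      have hz : volume B = 0 := le_antisymm
        (by simpa [ENNReal.ofReal_eq_zero.mpr hneg.le] using hpair a₁ h1 a₂ h2) zero_le
      exact hB0.ne' hz
  -- G is nonempty and bounded
  obtain ⟨a₀, ha₀⟩ := nonempty_of_measure_ne_zero (show volume G ≠ 0 by rw [hGA]; exact hA0.ne')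
  have hGne : G.Nonempty := ⟨a₀, ha₀⟩
  have hbdd : ∀ a ∈ G, a₀ - (2 * c - β) ≤ a ∧ a ≤ a₀ + (2 * c - β) := by
    intro a ha
    have := hdist a₀ ha₀ a ha
    constructor <;> linarith [abs_le.mp (le_trans (le_refl _) this) |>.1,
      abs_le.mp (le_trans (le_refl _) this) |>.2]
  have hbddA : BddAbove G := ⟨a₀ + (2 * c - β), fun a ha => (hbdd a ha).2⟩
  have hbddB : BddBelow G := ⟨a₀ - (2 * c - β), fun a ha => (hbdd a ha).1⟩
  set i := sInf G with hi
  set s := sSup G with hs'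
  have hsi : s - i ≤ 2 * c - β := by
    have : s ≤ i + (2 * c - β) := by
      apply csSup_le hGne
      intro a ha
      have : i ≥ a - (2 * c - β) := by
        apply le_csInf hGne
        intro a' ha'
        have := hdist a ha a' ha'
        linarith [abs_le.mp this |>.1, abs_le.mp this |>.2]
      linarith
    linarith
  have hAle : volume A ≤ ENNReal.ofReal (2 * c - β) := by
    rw [← hGA]
    calc volume G ≤ volume (Icc i s) :=
          measure_mono (fun a ha => ⟨csInf_le hbddB ha, le_csSup hbddA ha⟩)
      _ = ENNReal.ofReal (s - i) := Real.volume_Icc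
      _ ≤ ENNReal.ofReal (2 * c - β) := ENNReal.ofReal_le_ofReal hsi
  have hsum : volume A + volume B ≤ ENNReal.ofReal (2 * c) := by
    have : volume B = ENNReal.ofReal β := (ENNReal.ofReal_toReal hBfin).symm
    rw [this]
    calc volume A + ENNReal.ofReal β ≤ ENNReal.ofReal (2 * c - β) + ENNReal.ofReal β :=
          add_le_add_left hAle _
      _ = ENNReal.ofReal (2 * c) := by
          rw [← ENNReal.ofReal_add (by linarith [hdist a₀ ha₀ a₀ ha₀, abs_nonneg (a₀ - a₀)]) hβ0.le]
          ring_nf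
  refine ⟨hsum, ?_⟩
  -- product bound via AM-GM
  have hAfin : volume A ≠ ⊤ :=
    ne_top_of_le_ne_top (by simp) hAle
  set α := (volume A).toReal with hα
  have hα0 : 0 ≤ α := ENNReal.toReal_nonneg
  have hab : α + β ≤ 2 * c := by
    have := ENNReal.toReal_le_of_le_ofReal (by positivity) hsum
    rwa [ENNReal.toReal_add hAfin hBfin] at this
  have hprod : α * β ≤ c ^ 2 := by nlinarith [sq_nonneg (α - β)]
  calc volume A * volume B = ENNReal.ofReal α * ENNReal.ofReal β := by
        rw [ENNReal.ofReal_toReal hAfin, ENNReal.ofReal_toReal hBfin]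
    _ = ENNReal.ofReal (α * β) := (ENNReal.ofReal_mul hα0).symm
    _ ≤ ENNReal.ofReal (c ^ 2) := ENNReal.ofReal_le_ofReal hprod
end

section
/- For all n ≥ 3, the extremal entropy of the metric polytope satisfies ex(E(K_n), M_n) = binom(n,2)·log 2; that is, every box b = ∏_{e ∈ E(K_n)} A_e (with each A_e ⊆ [0,1] Lebesgue-measurable) satisfying vol(b \ M_n) = 0 has vol(b) ≤ 2^{−binom(n,2)}, and the box [1/2, 1]^{E(K_n)} is contained in M_n and has volume exactly 2^{−binom(n,2)}. -/
open MeasureTheory Filter Set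

noncomputable section

/-- The edge set of the complete graph `K_n`, encoded as ordered pairs `(i,j)` with
`i < j`. -/
def EdgeType (n : ℕ) : Type := {p : Fin n × Fin n // p.1 < p.2}

instance (n : ℕ) : Fintype (EdgeType n) := Subtype.fintype _
instance (n : ℕ) : DecidableEq (EdgeType n) := Subtype.instDecidableEq

/-- The edge `{i,j}` for distinct `i j`. -/
def edgeOf {n : ℕ} (i j : Fin n) (h : i ≠ j) : EdgeType n :=
  if hij : i < j then ⟨(i, j), hij⟩ else ⟨(j, i), (not_lt.mp hij).lt_of_ne' h⟩

/-- The value of an edge-decoration `d` on the unordered pair `{i,j}` (junk value `0`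
if `i = j`). -/
def dval {n : ℕ} (d : EdgeType n → ℝ) (i j : Fin n) : ℝ :=
  if h : i = j then 0 else d (edgeOf i j h)

/-- The metric polytope `M_n ⊆ [0,1]^{E(K_n)}`: distances in `[0,1]` satisfying all
triangle inequalities. -/
def metricPolytope (n : ℕ) : Set (EdgeType n → ℝ) :=
  {d | (∀ e, d e ∈ Set.Icc (0:ℝ) 1) ∧
    ∀ i j k : Fin n, i ≠ j → j ≠ k → i ≠ k → dval d i j ≤ dval d i k + dval d k j}


-- ## Essential endpoints of a measurable subset of [0,1]

def loEnd (A : Set ℝ) : ℝ := sSup {t | volume (A ∩ Set.Iio t) = 0}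
def hiEnd (A : Set ℝ) : ℝ := sInf {t | volume (A ∩ Set.Ioi t) = 0}

section Ends
variable {A : Set ℝ}


lemma lo_mem_zero (hA : A ⊆ Icc 0 1) : (0:ℝ) ∈ {t | volume (A ∩ Set.Iio t) = 0} := by
  have : A ∩ Set.Iio 0 = ∅ := by
    ext x; simp only [mem_inter_iff, mem_Iio, mem_empty_iff_false, iff_false, not_and, not_lt]
    exact fun hx => (hA hx).1
  simp [this]

lemma lo_bddAbove (h0 : volume A ≠ 0) (hA : A ⊆ Icc 0 1) :
    ∀ t ∈ {t | volume (A ∩ Set.Iio t) = 0}, t ≤ 1 := by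
  intro t ht
  by_contra h
  push_neg at h
  have : A ∩ Set.Iio t = A := by
    apply inter_eq_left.2
    intro x hx; exact lt_of_le_of_lt (hA hx).2 h
  exact h0 (by simpa [this] using ht)

lemma loEnd_nonneg (h0 : volume A ≠ 0) (hA : A ⊆ Icc 0 1) : 0 ≤ loEnd A :=
  le_csSup ⟨1, lo_bddAbove h0 hA⟩ (lo_mem_zero hA)

lemma loEnd_le_one (h0 : volume A ≠ 0) (hA : A ⊆ Icc 0 1) : loEnd A ≤ 1 :=
  csSup_le ⟨0, lo_mem_zero hA⟩ (lo_bddAbove h0 hA)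

lemma loEnd_null (hA : A ⊆ Icc 0 1) : volume (A ∩ Set.Iio (loEnd A)) = 0 := by
  have hsub : A ∩ Set.Iio (loEnd A) ⊆ ⋃ m : ℕ, A ∩ Set.Iio (loEnd A - 1/(m+1)) := by
    rintro x ⟨hxA, hx⟩
    rw [mem_Iio] at hx
    obtain ⟨m, hm⟩ := exists_nat_one_div_lt (sub_pos.2 hx)
    exact mem_iUnion.2 ⟨m, hxA, by rw [mem_Iio]; push_cast at hm ⊢; linarith⟩
  refine measure_mono_null hsub (measure_iUnion_null fun m => ?_)
  have hlt : loEnd A - 1/(m+1) < loEnd A := by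
    have : (0:ℝ) < 1/(m+1) := by positivity
    linarith
  obtain ⟨a, ha, hlt2⟩ := exists_lt_of_lt_csSup ⟨0, lo_mem_zero hA⟩ hlt
  exact measure_mono_null (inter_subset_inter_right _ (Iio_subset_Iio hlt2.le)) ha

lemma loEnd_pos (h0 : volume A ≠ 0) (hA : A ⊆ Icc 0 1) {ε : ℝ} (hε : 0 < ε) :
    volume (A ∩ Set.Iio (loEnd A + ε)) ≠ 0 := by
  intro h
  have : loEnd A + ε ≤ loEnd A := le_csSup ⟨1, lo_bddAbove h0 hA⟩ h
  linarith

lemma hi_mem_one (hA : A ⊆ Icc 0 1) : (1:ℝ) ∈ {t | volume (A ∩ Set.Ioi t) = 0} := by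
  have : A ∩ Set.Ioi 1 = ∅ := by
    ext x; simp only [mem_inter_iff, mem_Ioi, mem_empty_iff_false, iff_false, not_and, not_lt]
    exact fun hx => (hA hx).2
  simp [this]

lemma hi_bddBelow (h0 : volume A ≠ 0) (hA : A ⊆ Icc 0 1) :
    ∀ t ∈ {t | volume (A ∩ Set.Ioi t) = 0}, 0 ≤ t := by
  intro t ht
  by_contra h
  push_neg at h
  have : A ∩ Set.Ioi t = A := by
    apply inter_eq_left.2
    intro x hx; exact lt_of_lt_of_le h (hA hx).1
  exact h0 (by simpa [this] using ht)

lemma hiEnd_le_one (h0 : volume A ≠ 0) (hA : A ⊆ Icc 0 1) : hiEnd A ≤ 1 :=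
  csInf_le ⟨0, hi_bddBelow h0 hA⟩ (hi_mem_one hA)

lemma hiEnd_nonneg (h0 : volume A ≠ 0) (hA : A ⊆ Icc 0 1) : 0 ≤ hiEnd A :=
  le_csInf ⟨1, hi_mem_one hA⟩ (hi_bddBelow h0 hA)

lemma hiEnd_null (hA : A ⊆ Icc 0 1) : volume (A ∩ Set.Ioi (hiEnd A)) = 0 := by
  have hsub : A ∩ Set.Ioi (hiEnd A) ⊆ ⋃ m : ℕ, A ∩ Set.Ioi (hiEnd A + 1/(m+1)) := by
    rintro x ⟨hxA, hx⟩
    rw [mem_Ioi] at hx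
    obtain ⟨m, hm⟩ := exists_nat_one_div_lt (sub_pos.2 hx)
    exact mem_iUnion.2 ⟨m, hxA, by rw [mem_Ioi]; push_cast at hm ⊢; linarith⟩
  refine measure_mono_null hsub (measure_iUnion_null fun m => ?_)
  have hlt : hiEnd A < hiEnd A + 1/(m+1) := by
    have : (0:ℝ) < 1/(m+1) := by positivity
    linarith
  obtain ⟨a, ha, hlt2⟩ := exists_lt_of_csInf_lt ⟨1, hi_mem_one hA⟩ hlt
  exact measure_mono_null (inter_subset_inter_right _ (Ioi_subset_Ioi hlt2.le)) ha

lemma hiEnd_pos (h0 : volume A ≠ 0) (hA : A ⊆ Icc 0 1) {ε : ℝ} (hε : 0 < ε) :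
    volume (A ∩ Set.Ioi (hiEnd A - ε)) ≠ 0 := by
  intro h
  have : hiEnd A ≤ hiEnd A - ε := csInf_le ⟨0, hi_bddBelow h0 hA⟩ h
  linarith

lemma vol_le_ends (h0 : volume A ≠ 0) (hA : A ⊆ Icc 0 1) :
    (volume A).toReal ≤ hiEnd A - loEnd A ∧ loEnd A ≤ hiEnd A := by
  have hsub : A ⊆ (A ∩ Set.Iio (loEnd A)) ∪ ((A ∩ Set.Ioi (hiEnd A)) ∪ Icc (loEnd A) (hiEnd A)) := by
    intro x hx
    rcases lt_or_ge x (loEnd A) with h | h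
    · exact Or.inl ⟨hx, h⟩
    rcases le_or_gt x (hiEnd A) with h' | h'
    · exact Or.inr (Or.inr ⟨h, h'⟩)
    · exact Or.inr (Or.inl ⟨hx, h'⟩)
  have hle : volume A ≤ ENNReal.ofReal (hiEnd A - loEnd A) := by
    calc volume A ≤ _ := measure_mono hsub
    _ ≤ volume (A ∩ Set.Iio (loEnd A)) + (volume (A ∩ Set.Ioi (hiEnd A)) + volume (Icc (loEnd A) (hiEnd A))) := le_trans (measure_union_le _ _) (by gcongr; exact measure_union_le _ _)
    _ = ENNReal.ofReal (hiEnd A - loEnd A) := by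
        rw [loEnd_null hA, hiEnd_null hA, Real.volume_Icc]; simp
  have hne : loEnd A ≤ hiEnd A := by
    by_contra h
    push_neg at h
    rw [ENNReal.ofReal_eq_zero.2 (by linarith)] at hle
    exact h0 (le_antisymm hle zero_le)
  exact ⟨(ENNReal.le_ofReal_iff_toReal_le (ne_top_of_le_ne_top ENNReal.ofReal_ne_top hle) (by linarith)).1 hle, hne⟩


end Ends

-- ## Counting and product lemmas


def FF (n : ℕ) (f : EdgeType n → ℝ) (a b : Fin n) : ℝ := if h : a < b then f ⟨(a,b),h⟩ else 1

def ET (n : ℕ) : Finset (Fin n × Fin n) := Finset.univ.filter (fun q => q.1 < q.2)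
def TT (n : ℕ) : Finset (Fin n × Fin n × Fin n) :=
  Finset.univ.filter (fun p => p.1 < p.2.1 ∧ p.2.1 < p.2.2)

lemma prod_ET (n : ℕ) (f : EdgeType n → ℝ) :
    ∏ q ∈ ET n, FF n f q.1 q.2 = ∏ e : EdgeType n, f e := by
  rw [Finset.prod_subtype (p := fun q : Fin n × Fin n => q.1 < q.2) (ET n)
    (fun q => by simp [ET]) (fun q => FF n f q.1 q.2)]
  refine Finset.prod_congr rfl fun a _ => ?_
  show FF n f a.1.1 a.1.2 = f a
  rw [FF, dif_pos a.2]

lemma fiber1 (n : ℕ) (q : Fin n × Fin n) (hq : q.1 < q.2) :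
    (TT n).filter (fun p => (p.1, p.2.1) = q) =
      (Finset.Ioi q.2).image (fun k => (q.1, q.2, k)) := by
  obtain ⟨q1, q2⟩ := q
  ext p
  obtain ⟨p1, p2, p3⟩ := p
  simp only [Finset.mem_filter, Finset.mem_image, Finset.mem_Ioi, TT, Finset.mem_univ, true_and]
  constructor
  · rintro ⟨⟨h1, h2⟩, h3⟩
    obtain ⟨rfl, rfl⟩ := Prod.mk.inj h3
    exact ⟨p3, h2, rfl⟩
  · rintro ⟨k, hk, h⟩
    obtain ⟨rfl, h'⟩ := Prod.mk.inj h
    obtain ⟨rfl, rfl⟩ := Prod.mk.inj h'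
    exact ⟨⟨hq, hk⟩, rfl⟩

lemma fiber2 (n : ℕ) (q : Fin n × Fin n) (hq : q.1 < q.2) :
    (TT n).filter (fun p => (p.1, p.2.2) = q) =
      (Finset.Ioo q.1 q.2).image (fun j => (q.1, j, q.2)) := by
  obtain ⟨q1, q2⟩ := q
  ext p
  obtain ⟨p1, p2, p3⟩ := p
  simp only [Finset.mem_filter, Finset.mem_image, Finset.mem_Ioo, TT, Finset.mem_univ, true_and]
  constructor
  · rintro ⟨⟨h1, h2⟩, h3⟩
    have h4 : (p1, p3) = (q1, q2) := h3
    obtain ⟨rfl, rfl⟩ := Prod.mk.inj h4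
    exact ⟨p2, ⟨h1, h2⟩, rfl⟩
  · rintro ⟨j, hj, h⟩
    obtain ⟨rfl, h'⟩ := Prod.mk.inj h
    obtain ⟨rfl, rfl⟩ := Prod.mk.inj h'
    exact ⟨⟨hj.1, hj.2⟩, rfl⟩

lemma fiber3 (n : ℕ) (q : Fin n × Fin n) (hq : q.1 < q.2) :
    (TT n).filter (fun p => (p.2.1, p.2.2) = q) =
      (Finset.Iio q.1).image (fun i => (i, q.1, q.2)) := by
  obtain ⟨q1, q2⟩ := q
  ext p
  obtain ⟨p1, p2, p3⟩ := p
  simp only [Finset.mem_filter, Finset.mem_image, Finset.mem_Iio, TT, Finset.mem_univ, true_and]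
  constructor
  · rintro ⟨⟨h1, h2⟩, h3⟩
    have h4 : (p2, p3) = (q1, q2) := h3
    obtain ⟨rfl, rfl⟩ := Prod.mk.inj h4
    exact ⟨p1, h1, rfl⟩
  · rintro ⟨i, hi, h⟩
    obtain ⟨rfl, h'⟩ := Prod.mk.inj h
    obtain ⟨rfl, rfl⟩ := Prod.mk.inj h'
    exact ⟨⟨hi, hq⟩, rfl⟩

lemma inj_third (n : ℕ) (q : Fin n × Fin n) :
    Function.Injective (fun k : Fin n => (q.1, q.2, k)) := fun a b h => by
  simpa using h

lemma inj_mid (n : ℕ) (q : Fin n × Fin n) :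
    Function.Injective (fun j : Fin n => (q.1, j, q.2)) := fun a b h => by
  simpa using h

lemma inj_first (n : ℕ) (q : Fin n × Fin n) :
    Function.Injective (fun i : Fin n => (i, q.1, q.2)) := fun a b h => by
  simpa using h

lemma count_prod (n : ℕ) (f : EdgeType n → ℝ) :
    ∏ p ∈ TT n, (FF n f p.1 p.2.1 * FF n f p.1 p.2.2 * FF n f p.2.1 p.2.2) =
      (∏ e : EdgeType n, f e) ^ (n - 2) := by
  have key : ∀ g : Fin n × Fin n × Fin n → Fin n × Fin n, (∀ p ∈ TT n, g p ∈ ET n) →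
      ∏ p ∈ TT n, FF n f (g p).1 (g p).2 =
        ∏ q ∈ ET n, (FF n f q.1 q.2) ^ ((TT n).filter (fun p => g p = q)).card := by
    intro g hg
    rw [← Finset.prod_fiberwise_of_maps_to hg (fun p => FF n f (g p).1 (g p).2)]
    refine Finset.prod_congr rfl fun q hq => ?_
    rw [← Finset.prod_const]
    exact Finset.prod_congr rfl fun p hp => by rw [(Finset.mem_filter.1 hp).2]
  have hg1 : ∀ p ∈ TT n, (p.1, p.2.1) ∈ ET n := by
    intro p hp; simp only [TT, ET, Finset.mem_filter, Finset.mem_univ, true_and] at *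
    exact hp.1
  have hg2 : ∀ p ∈ TT n, (p.1, p.2.2) ∈ ET n := by
    intro p hp; simp only [TT, ET, Finset.mem_filter, Finset.mem_univ, true_and] at *
    exact hp.1.trans hp.2
  have hg3 : ∀ p ∈ TT n, (p.2.1, p.2.2) ∈ ET n := by
    intro p hp; simp only [TT, ET, Finset.mem_filter, Finset.mem_univ, true_and] at *
    exact hp.2
  rw [Finset.prod_mul_distrib, Finset.prod_mul_distrib,
    key _ hg1, key _ hg2, key _ hg3, ← Finset.prod_mul_distrib, ← Finset.prod_mul_distrib,
    ← prod_ET n f, ← Finset.prod_pow]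
  refine Finset.prod_congr rfl fun q hq => ?_
  have hq' : q.1 < q.2 := by simpa [ET] using hq
  rw [fiber1 n q hq', fiber2 n q hq', fiber3 n q hq',
    Finset.card_image_of_injective _ (inj_third n q),
    Finset.card_image_of_injective _ (inj_mid n q),
    Finset.card_image_of_injective _ (inj_first n q),
    Fin.card_Ioi, Fin.card_Ioo, Fin.card_Iio, ← pow_add, ← pow_add]
  congr 1
  have h1 : (q.1 : ℕ) < q.2 := hq'
  have h2 : (q.2 : ℕ) < n := q.2.isLt
  omega

lemma card_ET' (n : ℕ) : (ET n).card = n.choose 2 := by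
  rw [Finset.card_eq_sum_card_fiberwise (t := Finset.univ)
    (f := fun q : Fin n × Fin n => q.2) (fun q _ => Finset.mem_univ q.2)]
  have hfib : ∀ b : Fin n, (ET n).filter (fun q => q.2 = b) =
      (Finset.Iio b).image (fun a => (a, b)) := by
    intro b
    ext p
    obtain ⟨p1, p2⟩ := p
    simp only [Finset.mem_filter, Finset.mem_image, Finset.mem_Iio, ET, Finset.mem_univ, true_and]
    constructor
    · rintro ⟨h1, rfl⟩
      exact ⟨p1, h1, rfl⟩
    · rintro ⟨a, ha, h⟩
      obtain ⟨rfl, rfl⟩ := Prod.mk.inj h.symm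
      exact ⟨ha, rfl⟩
  have : ∀ b : Fin n, ((ET n).filter (fun q => q.2 = b)).card = (b : ℕ) := by
    intro b
    rw [hfib b, Finset.card_image_of_injective _ (fun a b h => by simpa using h), Fin.card_Iio]
  rw [Finset.sum_congr rfl (fun b _ => this b), Fin.sum_univ_eq_sum_range (fun i => i)]
  have h2 := Finset.sum_range_id_mul_two n
  have h3 := Nat.choose_two_right n
  omega

lemma card_ET (n : ℕ) : Fintype.card (EdgeType n) = n.choose 2 := by
  rw [← card_ET' n]
  exact Fintype.card_subtype _

lemma amgm3 (d1 d2 d3 : ℝ) (h1 : 0 ≤ d1) (h2 : 0 ≤ d2) (h3 : 0 ≤ d3)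
    (hs : d1 + d2 + d3 ≤ 3/2) : d1 * d2 * d3 ≤ 1/8 := by
  nlinarith [sq_nonneg (d1 - d2), sq_nonneg (d2 - d3), sq_nonneg (d1 - d3),
    sq_nonneg (d1 + d2 + d3), mul_nonneg h1 h2, mul_nonneg h2 h3, mul_nonneg h1 h3,
    sq_nonneg (d1 + d2 - 2*d3), sq_nonneg (d2 + d3 - 2*d1), sq_nonneg (d1 + d3 - 2*d2)]

lemma tri_arith (m1 m2 m3 M1 M2 M3 : ℝ)
    (hm1 : 0 ≤ m1) (hm2 : 0 ≤ m2) (hm3 : 0 ≤ m3)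
    (hM1 : M1 ≤ 1) (hM2 : M2 ≤ 1) (hM3 : M3 ≤ 1)
    (h1 : m1 ≤ M1) (h2 : m2 ≤ M2) (h3 : m3 ≤ M3)
    (t1 : M1 ≤ m2 + m3) (t2 : M2 ≤ m1 + m3) (t3 : M3 ≤ m1 + m2) :
    (M1 - m1) * (M2 - m2) * (M3 - m3) ≤ 1/8 := by
  apply amgm3 _ _ _ (by linarith) (by linarith) (by linarith)
  linarith



-- ## dval lemmas

lemma dval_lt {n : ℕ} (d : EdgeType n → ℝ) {i j : Fin n} (h : i < j) :
    dval d i j = d ⟨(i,j), h⟩ := by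
  rw [dval, dif_neg h.ne]; exact congrArg d (dif_pos h)

lemma dval_gt {n : ℕ} (d : EdgeType n → ℝ) {i j : Fin n} (h : i < j) :
    dval d j i = d ⟨(i,j), h⟩ := by
  rw [dval, dif_neg h.ne']; exact congrArg d (dif_neg (not_lt.2 h.le))

-- ## Key sub-box lemma

lemma hi_le_lo_add_lo {n : ℕ} (A : EdgeType n → Set ℝ)
    (hmeas : ∀ e, MeasurableSet (A e)) (hsub : ∀ e, A e ⊆ Set.Icc 0 1)
    (hpos : ∀ e, volume (A e) ≠ 0)
    (hnull : volume (Set.univ.pi A \ metricPolytope n) = 0)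
    (e f g : EdgeType n) (hef : e ≠ f) (heg : e ≠ g) (hfg : f ≠ g)
    (htri : ∀ d ∈ metricPolytope n, d e ≤ d f + d g) :
    hiEnd (A e) ≤ loEnd (A f) + loEnd (A g) := by
  by_contra hcon
  push_neg at hcon
  set ε := (hiEnd (A e) - loEnd (A f) - loEnd (A g)) / 3 with hεdef
  have hε : 0 < ε := by rw [hεdef]; linarith
  set P : EdgeType n → Set ℝ := fun e' =>
    if e' = e then A e ∩ Set.Ioi (hiEnd (A e) - ε)
    else if e' = f then A f ∩ Set.Iio (loEnd (A f) + ε)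
    else if e' = g then A g ∩ Set.Iio (loEnd (A g) + ε)
    else A e' with hP
  have hPsub : ∀ e', P e' ⊆ A e' := by
    intro e'
    rw [hP]
    dsimp only
    split_ifs with h1 h2 h3
    · subst h1; exact Set.inter_subset_left
    · subst h2; exact Set.inter_subset_left
    · subst h3; exact Set.inter_subset_left
    · exact subset_rfl
  have hPpos : ∀ e', volume (P e') ≠ 0 := by
    intro e'
    rw [hP]
    dsimp only
    split_ifs with h1 h2 h3
    · exact hiEnd_pos (hpos e) (hsub e) hε
    · exact loEnd_pos (hpos f) (hsub f) hε
    · exact loEnd_pos (hpos g) (hsub g) hε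
    · exact hpos e'
  have hPP : volume (Set.univ.pi P) ≠ 0 := by
    rw [volume_pi_pi]
    intro h
    obtain ⟨a, -, ha⟩ := Finset.prod_eq_zero_iff.1 h
    exact hPpos a ha
  have hne : (Set.univ.pi P ∩ metricPolytope n).Nonempty := by
    by_contra hJ
    rw [Set.not_nonempty_iff_eq_empty] at hJ
    have hsub2 : Set.univ.pi P ⊆ Set.univ.pi A \ metricPolytope n := by
      intro d hd
      refine ⟨fun e' he' => hPsub e' (hd e' he'), fun hM => ?_⟩
      exact Set.eq_empty_iff_forall_notMem.1 hJ d ⟨hd, hM⟩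
    exact hPP (measure_mono_null hsub2 hnull)
  obtain ⟨d, hd, hdM⟩ := hne
  have hPe : P e = A e ∩ Set.Ioi (hiEnd (A e) - ε) := by
    simp [hP]
  have hPf : P f = A f ∩ Set.Iio (loEnd (A f) + ε) := by
    simp [hP, Ne.symm hef]
  have hPg : P g = A g ∩ Set.Iio (loEnd (A g) + ε) := by
    simp [hP, Ne.symm heg, Ne.symm hfg]
  have h1 : d e ∈ A e ∩ Set.Ioi (hiEnd (A e) - ε) := hPe ▸ hd e (Set.mem_univ e)
  have h2 : d f ∈ A f ∩ Set.Iio (loEnd (A f) + ε) := hPf ▸ hd f (Set.mem_univ f)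
  have h3 : d g ∈ A g ∩ Set.Iio (loEnd (A g) + ε) := hPg ▸ hd g (Set.mem_univ g)
  have hT := htri d hdM
  have e1 : hiEnd (A e) - ε < d e := h1.2
  have e2 : d f < loEnd (A f) + ε := h2.2
  have e3 : d g < loEnd (A g) + ε := h3.2
  have : ε * 3 = hiEnd (A e) - loEnd (A f) - loEnd (A g) := by
    rw [hεdef]; ring
  linarith

/-- **Theorem (extremal entropy of the metric polytope).**
For `n ≥ 3`, `ex(E(K_n), M_n) = C(n,2) log 2`: every box `b` with `vol(b \ M_n) = 0`
has `vol(b) ≤ 2^{-C(n,2)}`, and the box `[1/2,1]^{E(K_n)}` is contained in `M_n` and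
has volume exactly `2^{-C(n,2)}`. -/
theorem extremal_entropy_metric_polytope (n : ℕ) (hn : 3 ≤ n) :
    (∀ b : Set (EdgeType n → ℝ), IsBox b → volume (b \ metricPolytope n) = 0 →
      volume b ≤ ENNReal.ofReal ((1 / 2 : ℝ) ^ (n.choose 2))) ∧
    (Set.univ.pi (fun _ : EdgeType n => Set.Icc (1/2 : ℝ) 1) ⊆ metricPolytope n) ∧
    volume (Set.univ.pi (fun _ : EdgeType n => Set.Icc (1/2 : ℝ) 1)) =
      ENNReal.ofReal ((1 / 2 : ℝ) ^ (n.choose 2)) := by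
  have hcard : Fintype.card (EdgeType n) = n.choose 2 := card_ET n
  refine ⟨?_, ?_, ?_⟩
  · -- upper bound for boxes
    rintro b ⟨A, hA, rfl⟩ hnull
    rw [volume_pi_pi]
    by_cases hz : ∃ e, volume (A e) = 0
    · obtain ⟨e, he⟩ := hz
      rw [Finset.prod_eq_zero (Finset.mem_univ e) he]
      exact zero_le
    push_neg at hz
    set lo : EdgeType n → ℝ := fun e => loEnd (A e) with hlo
    set hi : EdgeType n → ℝ := fun e => hiEnd (A e) with hhi
    set D : EdgeType n → ℝ := fun e => hi e - lo e with hD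
    have hmeas : ∀ e, MeasurableSet (A e) := fun e => (hA e).1
    have hsub : ∀ e, A e ⊆ Set.Icc 0 1 := fun e => (hA e).2
    have hlz : ∀ e, 0 ≤ lo e := fun e => loEnd_nonneg (hz e) (hsub e)
    have hho : ∀ e, hi e ≤ 1 := fun e => hiEnd_le_one (hz e) (hsub e)
    have hlh : ∀ e, lo e ≤ hi e := fun e => (vol_le_ends (hz e) (hsub e)).2
    have hvD : ∀ e, (volume (A e)).toReal ≤ D e := fun e => (vol_le_ends (hz e) (hsub e)).1
    have hD0 : ∀ e, 0 ≤ D e := fun e => by have := hlh e; rw [hD]; dsimp; linarith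
    have tri : ∀ p ∈ TT n,
        FF n D p.1 p.2.1 * FF n D p.1 p.2.2 * FF n D p.2.1 p.2.2 ≤ 1/8 := by
      intro p hp
      rw [TT, Finset.mem_filter] at hp
      obtain ⟨-, h1, h2⟩ := hp
      have h13 : p.1 < p.2.2 := h1.trans h2
      set e : EdgeType n := ⟨(p.1, p.2.1), h1⟩ with he
      set f : EdgeType n := ⟨(p.1, p.2.2), h13⟩ with hf
      set g : EdgeType n := ⟨(p.2.1, p.2.2), h2⟩ with hg
      have hef : e ≠ f := fun hEq => h2.ne (congrArg (fun x : EdgeType n => x.1.2) hEq)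
      have heg : e ≠ g := fun hEq => h1.ne (congrArg (fun x : EdgeType n => x.1.1) hEq)
      have hfg : f ≠ g := fun hEq => h1.ne (congrArg (fun x : EdgeType n => x.1.1) hEq)
      have t1 : hiEnd (A e) ≤ loEnd (A f) + loEnd (A g) := by
        refine hi_le_lo_add_lo A hmeas hsub hz hnull e f g hef heg hfg ?_
        intro d hd
        have := hd.2 p.1 p.2.1 p.2.2 h1.ne h2.ne h13.ne
        rwa [dval_lt d h1, dval_lt d h13, dval_gt d h2] at this
      have t2 : hiEnd (A f) ≤ loEnd (A e) + loEnd (A g) := by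
        refine hi_le_lo_add_lo A hmeas hsub hz hnull f e g hef.symm hfg ?_ ?_
        · exact fun hEq => h1.ne (congrArg (fun x : EdgeType n => x.1.1) hEq)
        intro d hd
        have := hd.2 p.1 p.2.2 p.2.1 h13.ne h2.ne' h1.ne
        rwa [dval_lt d h13, dval_lt d h1, dval_lt d h2] at this
      have t3 : hiEnd (A g) ≤ loEnd (A e) + loEnd (A f) := by
        refine hi_le_lo_add_lo A hmeas hsub hz hnull g e f heg.symm hfg.symm ?_ ?_
        · exact hef
        intro d hd
        have := hd.2 p.2.1 p.2.2 p.1 h2.ne h13.ne' h1.ne'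
        rwa [dval_lt d h2, dval_gt d h1, dval_lt d h13] at this
      rw [FF, dif_pos h1, FF, dif_pos h13, FF, dif_pos h2]
      exact tri_arith (lo e) (lo f) (lo g) (hi e) (hi f) (hi g)
        (hlz e) (hlz f) (hlz g) (hho e) (hho f) (hho g)
        (hlh e) (hlh f) (hlh g) t1 t2 t3
    have hpow : (∏ e : EdgeType n, D e) ^ (n - 2) ≤
        (∏ e : EdgeType n, (1/2 : ℝ)) ^ (n - 2) := by
      rw [← count_prod n D, ← count_prod n (fun _ => (1/2 : ℝ))]
      refine Finset.prod_le_prod (fun p _ => ?_) (fun p hp => ?_)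
      · have hFF : ∀ a b : Fin n, 0 ≤ FF n D a b := by
          intro a b
          rw [FF]
          split_ifs with h
          · exact hD0 _
          · norm_num
        exact mul_nonneg (mul_nonneg (hFF _ _) (hFF _ _)) (hFF _ _)
      · rw [TT, Finset.mem_filter] at hp
        obtain ⟨-, h1, h2⟩ := hp
        have h13 : p.1 < p.2.2 := h1.trans h2
        have hrhs : FF n (fun _ => (1/2:ℝ)) p.1 p.2.1 * FF n (fun _ => (1/2:ℝ)) p.1 p.2.2 *
            FF n (fun _ => (1/2:ℝ)) p.2.1 p.2.2 = 1/8 := by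
          rw [FF, dif_pos h1, FF, dif_pos h13, FF, dif_pos h2]
          norm_num
        rw [hrhs]
        exact tri p (by rw [TT, Finset.mem_filter]; exact ⟨Finset.mem_univ p, h1, h2⟩)
    have hn2 : n - 2 ≠ 0 := by omega
    have hprodD : (∏ e : EdgeType n, D e) ≤ (1/2 : ℝ) ^ n.choose 2 := by
      have h2' : (∏ e : EdgeType n, (1/2 : ℝ)) = (1/2 : ℝ) ^ n.choose 2 := by
        rw [Finset.prod_const, Finset.card_univ, hcard]
      have := (pow_le_pow_iff_left₀ (Finset.prod_nonneg fun e _ => hD0 e)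
        (Finset.prod_nonneg fun _ _ => by norm_num) hn2).1 hpow
      rwa [h2'] at this
    have hfin : (∏ e : EdgeType n, volume (A e)) ≠ ⊤ := by
      refine (ENNReal.prod_lt_top fun e _ => ?_).ne
      exact ((measure_mono (hsub e)).trans_lt (by rw [Real.volume_Icc]; exact ENNReal.ofReal_lt_top))
    rw [ENNReal.le_ofReal_iff_toReal_le hfin (by positivity), ENNReal.toReal_prod]
    calc (∏ e : EdgeType n, (volume (A e)).toReal)
        ≤ ∏ e : EdgeType n, D e :=
          Finset.prod_le_prod (fun e _ => ENNReal.toReal_nonneg) (fun e _ => hvD e)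
      _ ≤ (1/2 : ℝ) ^ n.choose 2 := hprodD
  · -- the half box is contained in the polytope
    intro d hd
    have key : ∀ a b : Fin n, a ≠ b → dval d a b ∈ Set.Icc (1/2 : ℝ) 1 := by
      intro a b hab
      rw [dval, dif_neg hab]
      exact hd _ (Set.mem_univ _)
    refine ⟨fun e => ?_, fun i j k hij hjk hik => ?_⟩
    · have := hd e (Set.mem_univ e)
      exact ⟨by linarith [this.1], this.2⟩
    · have k1 := key i j hij
      have k2 := key i k hik
      have k3 := key k j hjk.symm
      have := k1.2
      have := k2.1
      have := k3.1
      linarith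
  · -- volume of the half box
    rw [volume_pi_pi]
    have : ∀ e : EdgeType n, volume (Set.Icc (1/2 : ℝ) 1) = ENNReal.ofReal (1/2 : ℝ) := by
      intro e; rw [Real.volume_Icc]; norm_num
    rw [Finset.prod_congr rfl fun e _ => this e, Finset.prod_const, Finset.card_univ, hcard,
      ← ENNReal.ofReal_pow (by norm_num)]


end
end

section
/- Let I₁, I₂, I₃ ⊆ [0,1] each be a nonempty finite union of intervals, and suppose that the set of triples (x₁,x₂,x₃) ∈ I₁ × I₂ × I₃ that fail one of the three triangle inequalities x₁ ≤ x₂ + x₃, x₂ ≤ x₁ + x₃, x₃ ≤ x₁ + x₂ has Lebesgue measure zero. Then λ(I₁)·λ(I₂)·λ(I₃) ≤ 1/8. -/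
open MeasureTheory Set

private lemma aux_inf (I : Set ℝ) (hI : I ⊆ Set.Icc 0 1) (hpos : volume I ≠ 0) :
    ∃ a : ℝ, 0 ≤ a ∧ volume (I ∩ Set.Iio a) = 0 ∧
      ∀ ε : ℝ, 0 < ε → volume (I ∩ Set.Iio (a + ε)) ≠ 0 := by
  set S : Set ℝ := {t | volume (I ∩ Set.Iio t) = 0} with hS
  have h0S : (0 : ℝ) ∈ S := by
    have h : I ∩ Set.Iio 0 = ∅ := by
      ext x
      simp only [mem_inter_iff, mem_Iio, mem_empty_iff_false, iff_false, not_and, not_lt]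
      exact fun hx => (hI hx).1
    show volume (I ∩ Set.Iio 0) = 0
    rw [h]; simp
  have hbdd : BddAbove S := by
    refine ⟨2, fun t ht => ?_⟩
    by_contra h
    push_neg at h
    have heq : I ∩ Set.Iio t = I :=
      inter_eq_left.mpr fun x hx => lt_of_le_of_lt (hI hx).2 (by linarith)
    exact hpos (heq ▸ ht)
  refine ⟨sSup S, le_csSup hbdd h0S, ?_, ?_⟩
  · have hsub : I ∩ Set.Iio (sSup S) ⊆ ⋃ n : ℕ, I ∩ Set.Iio (sSup S - 1 / (n + 1)) := by
      rintro x ⟨hxI, hx⟩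
      obtain ⟨n, hn⟩ := exists_nat_one_div_lt (show (0:ℝ) < sSup S - x by linarith [mem_Iio.mp hx])
      exact mem_iUnion.mpr ⟨n, hxI, by simp only [mem_Iio]; linarith⟩
    refine measure_mono_null hsub (measure_iUnion_null fun n => ?_)
    obtain ⟨t, htS, ht⟩ := exists_lt_of_lt_csSup ⟨0, h0S⟩
      (show sSup S - 1 / (n + 1) < sSup S by
        have : (0:ℝ) < 1 / (n + 1) := by positivity
        linarith)
    exact measure_mono_null (inter_subset_inter_right _ (Iio_subset_Iio ht.le)) htS
  · intro ε hε h
    have : sSup S + ε ≤ sSup S := le_csSup hbdd h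
    linarith

private lemma aux_sup (I : Set ℝ) (hI : I ⊆ Set.Icc 0 1) (hpos : volume I ≠ 0) :
    ∃ b : ℝ, b ≤ 1 ∧ volume (I ∩ Set.Ioi b) = 0 ∧
      ∀ ε : ℝ, 0 < ε → volume (I ∩ Set.Ioi (b - ε)) ≠ 0 := by
  set S : Set ℝ := {t | volume (I ∩ Set.Ioi t) = 0} with hS
  have h1S : (1 : ℝ) ∈ S := by
    have h : I ∩ Set.Ioi 1 = ∅ := by
      ext x
      simp only [mem_inter_iff, mem_Ioi, mem_empty_iff_false, iff_false, not_and, not_lt]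
      exact fun hx => (hI hx).2
    show volume (I ∩ Set.Ioi 1) = 0
    rw [h]; simp
  have hbdd : BddBelow S := by
    refine ⟨-1, fun t ht => ?_⟩
    by_contra h
    push_neg at h
    have heq : I ∩ Set.Ioi t = I :=
      inter_eq_left.mpr fun x hx => lt_of_lt_of_le (by linarith) (hI hx).1
    exact hpos (heq ▸ ht)
  refine ⟨sInf S, csInf_le hbdd h1S, ?_, ?_⟩
  · have hsub : I ∩ Set.Ioi (sInf S) ⊆ ⋃ n : ℕ, I ∩ Set.Ioi (sInf S + 1 / (n + 1)) := by
      rintro x ⟨hxI, hx⟩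
      obtain ⟨n, hn⟩ := exists_nat_one_div_lt (show (0:ℝ) < x - sInf S by linarith [mem_Ioi.mp hx])
      exact mem_iUnion.mpr ⟨n, hxI, by simp only [mem_Ioi]; linarith⟩
    refine measure_mono_null hsub (measure_iUnion_null fun n => ?_)
    obtain ⟨t, htS, ht⟩ := exists_lt_of_csInf_lt ⟨1, h1S⟩
      (show sInf S < sInf S + 1 / (n + 1) by
        have : (0:ℝ) < 1 / (n + 1) := by positivity
        linarith)
    exact measure_mono_null (inter_subset_inter_right _ (Ioi_subset_Ioi ht.le)) htS
  · intro ε hε h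
    have : sInf S ≤ sInf S - ε := csInf_le hbdd h
    linarith

private lemma cube_bound {a b c : ℝ} (ha : 0 ≤ a) (hb : 0 ≤ b) (hc : 0 ≤ c)
    (h : a + b + c ≤ 3 / 2) : a * b * c ≤ 1 / 8 := by
  have h1 : a * b ≤ ((a + b) / 2) ^ 2 := by nlinarith [sq_nonneg (a - b)]
  have h2 : a * b * c ≤ ((a + b) / 2) ^ 2 * c := mul_le_mul_of_nonneg_right h1 hc
  have ht : 0 ≤ a + b := by linarith
  have h3 : ((a + b) / 2) ^ 2 * c ≤ 1 / 8 := by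
    nlinarith [mul_nonneg (sq_nonneg (a + b - 1)) (show (0:ℝ) ≤ a + b + 1/2 by linarith),
      mul_nonneg (mul_nonneg ht ht) (show (0:ℝ) ≤ 3/2 - a - b - c by linarith)]
  linarith

/-- **Lemma (triangle-inequality boxes have volume at most 1/8).**
If `I₁, I₂, I₃ ⊆ [0,1]` are nonempty finite unions of intervals and almost every
triple in `I₁ × I₂ × I₃` satisfies all three triangle inequalities, then
`λ(I₁)·λ(I₂)·λ(I₃) ≤ 1/8`. -/
theorem triangle_box_volume_le
    (I₁ I₂ I₃ : Set ℝ)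
    (h₁ : I₁.Nonempty) (h₂ : I₂.Nonempty) (h₃ : I₃.Nonempty)
    (hs₁ : I₁ ⊆ Set.Icc 0 1) (hs₂ : I₂ ⊆ Set.Icc 0 1) (hs₃ : I₃ ⊆ Set.Icc 0 1)
    (hu₁ : ∃ s : Finset (Set ℝ), (∀ J ∈ s, J.OrdConnected) ∧ I₁ = ⋃₀ ↑s)
    (hu₂ : ∃ s : Finset (Set ℝ), (∀ J ∈ s, J.OrdConnected) ∧ I₂ = ⋃₀ ↑s)
    (hu₃ : ∃ s : Finset (Set ℝ), (∀ J ∈ s, J.OrdConnected) ∧ I₃ = ⋃₀ ↑s)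
    (h0 : volume {p : ℝ × ℝ × ℝ | p.1 ∈ I₁ ∧ p.2.1 ∈ I₂ ∧ p.2.2 ∈ I₃ ∧
      ¬(p.1 ≤ p.2.1 + p.2.2 ∧ p.2.1 ≤ p.1 + p.2.2 ∧ p.2.2 ≤ p.1 + p.2.1)} = 0) :
    volume I₁ * volume I₂ * volume I₃ ≤ ENNReal.ofReal (1 / 8) := by
  by_cases hv₁ : volume I₁ = 0
  · simp [hv₁]
  by_cases hv₂ : volume I₂ = 0
  · simp [hv₂]
  by_cases hv₃ : volume I₃ = 0
  · simp [hv₃]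
  obtain ⟨a₁, ha₁0, ha₁null, ha₁pos⟩ := aux_inf I₁ hs₁ hv₁
  obtain ⟨a₂, ha₂0, ha₂null, ha₂pos⟩ := aux_inf I₂ hs₂ hv₂
  obtain ⟨a₃, ha₃0, ha₃null, ha₃pos⟩ := aux_inf I₃ hs₃ hv₃
  obtain ⟨b₁, hb₁1, hb₁null, hb₁pos⟩ := aux_sup I₁ hs₁ hv₁
  obtain ⟨b₂, hb₂1, hb₂null, hb₂pos⟩ := aux_sup I₂ hs₂ hv₂
  obtain ⟨b₃, hb₃1, hb₃null, hb₃pos⟩ := aux_sup I₃ hs₃ hv₃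
  -- key triangle inequalities between essential bounds
  have key₁ : b₁ ≤ a₂ + a₃ := by
    by_contra h
    push_neg at h
    set ε := (b₁ - a₂ - a₃) / 3 with hε
    have hεpos : 0 < ε := by simp only [hε]; linarith
    have hsub : (I₁ ∩ Set.Ioi (b₁ - ε)) ×ˢ ((I₂ ∩ Set.Iio (a₂ + ε)) ×ˢ (I₃ ∩ Set.Iio (a₃ + ε)))
        ⊆ {p : ℝ × ℝ × ℝ | p.1 ∈ I₁ ∧ p.2.1 ∈ I₂ ∧ p.2.2 ∈ I₃ ∧
          ¬(p.1 ≤ p.2.1 + p.2.2 ∧ p.2.1 ≤ p.1 + p.2.2 ∧ p.2.2 ≤ p.1 + p.2.1)} := by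
      rintro ⟨x, y, z⟩ ⟨⟨hx, hx'⟩, ⟨hy, hy'⟩, ⟨hz, hz'⟩⟩
      simp only [mem_Ioi] at hx'
      simp only [mem_Iio] at hy' hz'
      refine ⟨hx, hy, hz, fun ⟨h1, _, _⟩ => ?_⟩
      simp only [hε] at *
      linarith
    have := measure_mono_null hsub h0
    rw [Measure.volume_eq_prod, Measure.prod_prod, Measure.volume_eq_prod,
      Measure.prod_prod] at this
    rcases mul_eq_zero.mp this with h' | h'
    · exact hb₁pos ε hεpos h'
    · rcases mul_eq_zero.mp h' with h'' | h''
      · exact ha₂pos ε hεpos h''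
      · exact ha₃pos ε hεpos h''
  have key₂ : b₂ ≤ a₁ + a₃ := by
    by_contra h
    push_neg at h
    set ε := (b₂ - a₁ - a₃) / 3 with hε
    have hεpos : 0 < ε := by simp only [hε]; linarith
    have hsub : (I₁ ∩ Set.Iio (a₁ + ε)) ×ˢ ((I₂ ∩ Set.Ioi (b₂ - ε)) ×ˢ (I₃ ∩ Set.Iio (a₃ + ε)))
        ⊆ {p : ℝ × ℝ × ℝ | p.1 ∈ I₁ ∧ p.2.1 ∈ I₂ ∧ p.2.2 ∈ I₃ ∧
          ¬(p.1 ≤ p.2.1 + p.2.2 ∧ p.2.1 ≤ p.1 + p.2.2 ∧ p.2.2 ≤ p.1 + p.2.1)} := by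
      rintro ⟨x, y, z⟩ ⟨⟨hx, hx'⟩, ⟨hy, hy'⟩, ⟨hz, hz'⟩⟩
      simp only [mem_Ioi] at hy'
      simp only [mem_Iio] at hx' hz'
      refine ⟨hx, hy, hz, fun ⟨_, h2, _⟩ => ?_⟩
      simp only [hε] at *
      linarith
    have := measure_mono_null hsub h0
    rw [Measure.volume_eq_prod, Measure.prod_prod, Measure.volume_eq_prod,
      Measure.prod_prod] at this
    rcases mul_eq_zero.mp this with h' | h'
    · exact ha₁pos ε hεpos h'
    · rcases mul_eq_zero.mp h' with h'' | h''
      · exact hb₂pos ε hεpos h''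
      · exact ha₃pos ε hεpos h''
  have key₃ : b₃ ≤ a₁ + a₂ := by
    by_contra h
    push_neg at h
    set ε := (b₃ - a₁ - a₂) / 3 with hε
    have hεpos : 0 < ε := by simp only [hε]; linarith
    have hsub : (I₁ ∩ Set.Iio (a₁ + ε)) ×ˢ ((I₂ ∩ Set.Iio (a₂ + ε)) ×ˢ (I₃ ∩ Set.Ioi (b₃ - ε)))
        ⊆ {p : ℝ × ℝ × ℝ | p.1 ∈ I₁ ∧ p.2.1 ∈ I₂ ∧ p.2.2 ∈ I₃ ∧
          ¬(p.1 ≤ p.2.1 + p.2.2 ∧ p.2.1 ≤ p.1 + p.2.2 ∧ p.2.2 ≤ p.1 + p.2.1)} := by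
      rintro ⟨x, y, z⟩ ⟨⟨hx, hx'⟩, ⟨hy, hy'⟩, ⟨hz, hz'⟩⟩
      simp only [mem_Ioi] at hz'
      simp only [mem_Iio] at hx' hy'
      refine ⟨hx, hy, hz, fun ⟨_, _, h3⟩ => ?_⟩
      simp only [hε] at *
      linarith
    have := measure_mono_null hsub h0
    rw [Measure.volume_eq_prod, Measure.prod_prod, Measure.volume_eq_prod,
      Measure.prod_prod] at this
    rcases mul_eq_zero.mp this with h' | h'
    · exact ha₁pos ε hεpos h'
    · rcases mul_eq_zero.mp h' with h'' | h''
      · exact ha₂pos ε hεpos h''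
      · exact hb₃pos ε hεpos h''
  -- volume bounds: vol Iᵢ ≤ ofReal (bᵢ - aᵢ)
  have hvol : ∀ (I : Set ℝ) (a b : ℝ), volume (I ∩ Set.Iio a) = 0 →
      volume (I ∩ Set.Ioi b) = 0 → volume I ≤ ENNReal.ofReal (b - a) := by
    intro I a b hna hnb
    have hsub : I ⊆ (I ∩ Set.Iio a) ∪ (Set.Icc a b ∪ (I ∩ Set.Ioi b)) := by
      intro x hx
      rcases lt_or_ge x a with h | h
      · exact Or.inl ⟨hx, h⟩
      rcases le_or_gt x b with h' | h'
      · exact Or.inr (Or.inl ⟨h, h'⟩)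
      · exact Or.inr (Or.inr ⟨hx, h'⟩)
    calc volume I ≤ volume (I ∩ Set.Iio a) + (volume (Set.Icc a b) + volume (I ∩ Set.Ioi b)) :=
          le_trans (measure_mono hsub) (le_trans (measure_union_le _ _)
            (by gcongr; exact measure_union_le _ _))
      _ = ENNReal.ofReal (b - a) := by rw [hna, hnb, Real.volume_Icc]; simp
  have hb₁ := hvol I₁ a₁ b₁ ha₁null hb₁null
  have hb₂ := hvol I₂ a₂ b₂ ha₂null hb₂null
  have hb₃ := hvol I₃ a₃ b₃ ha₃null hb₃null
  have hfin₁ : volume I₁ ≠ ⊤ := ne_top_of_le_ne_top ENNReal.ofReal_ne_top hb₁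
  have hfin₂ : volume I₂ ≠ ⊤ := ne_top_of_le_ne_top ENNReal.ofReal_ne_top hb₂
  have hfin₃ : volume I₃ ≠ ⊤ := ne_top_of_le_ne_top ENNReal.ofReal_ne_top hb₃
  have hd : ∀ (I : Set ℝ) (a b : ℝ), volume I ≠ 0 →
      volume I ≤ ENNReal.ofReal (b - a) → 0 ≤ b - a := by
    intro I a b h0' hle
    by_contra h
    push_neg at h
    rw [ENNReal.ofReal_eq_zero.mpr h.le] at hle
    exact h0' (le_antisymm hle zero_le)
  have hd₁ := hd I₁ a₁ b₁ hv₁ hb₁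
  have hd₂ := hd I₂ a₂ b₂ hv₂ hb₂
  have hd₃ := hd I₃ a₃ b₃ hv₃ hb₃
  have hr₁ : (volume I₁).toReal ≤ b₁ - a₁ := ENNReal.toReal_le_of_le_ofReal hd₁ hb₁
  have hr₂ : (volume I₂).toReal ≤ b₂ - a₂ := ENNReal.toReal_le_of_le_ofReal hd₂ hb₂
  have hr₃ : (volume I₃).toReal ≤ b₃ - a₃ := ENNReal.toReal_le_of_le_ofReal hd₃ hb₃
  have hmn₁ : 0 ≤ (volume I₁).toReal := ENNReal.toReal_nonneg
  have hmn₂ : 0 ≤ (volume I₂).toReal := ENNReal.toReal_nonneg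
  have hmn₃ : 0 ≤ (volume I₃).toReal := ENNReal.toReal_nonneg
  have hsum : (volume I₁).toReal + (volume I₂).toReal + (volume I₃).toReal ≤ 3 / 2 := by
    linarith
  have hcube : (volume I₁).toReal * (volume I₂).toReal * (volume I₃).toReal ≤ 1 / 8 :=
    cube_bound hmn₁ hmn₂ hmn₃ hsum
  calc volume I₁ * volume I₂ * volume I₃
      = ENNReal.ofReal ((volume I₁).toReal * (volume I₂).toReal * (volume I₃).toReal) := by
        rw [ENNReal.ofReal_mul (mul_nonneg hmn₁ hmn₂), ENNReal.ofReal_mul hmn₁,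
          ENNReal.ofReal_toReal hfin₁, ENNReal.ofReal_toReal hfin₂, ENNReal.ofReal_toReal hfin₃]
    _ ≤ ENNReal.ofReal (1 / 8) := ENNReal.ofReal_le_ofReal hcube
end

section
/- Fix an integer s ≥ 2 and a real number r ∈ (0, binom(s,2)], and for n ≥ s let P_n(s,r) ⊆ [0,1]^{E(K_n)} be the set of edge-weightings w : E(K_n) → [0,1] such that w(S) ≤ r for every s-element subset S of [n]. Then for all n ≥ s, ex(E(K_n), P_n(s,r)) = binom(n,2)·log(binom(s,2)/r), and equality (i.e. the maximum box volume (r/binom(s,2))^{binom(n,2)}) is attained, uniquely up to zero-measure sets, by the box [0, r/binom(s,2)]^{E(K_n)}. -/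
open MeasureTheory Filter Set

noncomputable section

/-- The edges of `K_n` lying inside a vertex subset `S`. -/
def edgesIn {n : ℕ} (S : Finset (Fin n)) : Finset (EdgeType n) :=
  Finset.univ.filter (fun e => e.val.1 ∈ S ∧ e.val.2 ∈ S)

/-- The hereditary property `P_n(s,r)`: edge-weightings `w : E(K_n) → [0,1]` in which
every `s`-set of vertices has weight at most `r`. -/
def weightedProp (n s : ℕ) (r : ℝ) : Set (EdgeType n → ℝ) :=
  {w | (∀ e, w e ∈ Set.Icc (0:ℝ) 1) ∧
    ∀ S : Finset (Fin n), S.card = s → ∑ e ∈ edgesIn S, w e ≤ r}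

/-! ### Auxiliary: essential supremum of a subset of `[0,1]` -/

/-- The essential supremum of a measurable subset of `[0,1]`. -/
def essM (A : Set ℝ) : ℝ := sInf {x : ℝ | 0 ≤ x ∧ volume (A \ Set.Icc 0 x) = 0}

lemma essM_setOf_nonempty {A : Set ℝ} (hA : A ⊆ Set.Icc 0 1) :
    {x : ℝ | 0 ≤ x ∧ volume (A \ Set.Icc 0 x) = 0}.Nonempty :=
  ⟨1, zero_le_one, by rw [Set.diff_eq_empty.2 hA]; exact measure_empty⟩

lemma essM_bdd {A : Set ℝ} : BddBelow {x : ℝ | 0 ≤ x ∧ volume (A \ Set.Icc 0 x) = 0} :=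
  ⟨0, fun _ hx => hx.1⟩

lemma essM_nonneg {A : Set ℝ} (hA : A ⊆ Set.Icc 0 1) : 0 ≤ essM A :=
  le_csInf (essM_setOf_nonempty hA) fun _ hx => hx.1

lemma essM_null {A : Set ℝ} (hA : A ⊆ Set.Icc 0 1) :
    volume (A \ Set.Icc 0 (essM A)) = 0 := by
  have hsub : A \ Set.Icc 0 (essM A) ⊆ ⋃ k : ℕ, A \ Set.Icc 0 (essM A + 1/(k+1)) := by
    rintro x ⟨hxA, hx⟩
    have hx0 : 0 ≤ x := (hA hxA).1
    have hlt : essM A < x := lt_of_not_ge fun h => hx ⟨hx0, h⟩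
    obtain ⟨k, hk⟩ := exists_nat_one_div_lt (sub_pos.2 hlt)
    exact Set.mem_iUnion.2 ⟨k, hxA, fun h => absurd h.2 (not_le.2 (by linarith))⟩
  refine measure_mono_null hsub (measure_iUnion_null fun k => ?_)
  have hlt : essM A < essM A + 1/(k+1) := by
    have : (0:ℝ) < 1/(k+1) := by positivity
    linarith
  obtain ⟨y, hy, hylt⟩ := exists_lt_of_csInf_lt (essM_setOf_nonempty hA) hlt
  refine measure_mono_null ?_ hy.2
  rintro x ⟨hx1, hx2⟩
  exact ⟨hx1, fun h => hx2 ⟨h.1, h.2.trans hylt.le⟩⟩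

lemma volume_le_essM {A : Set ℝ} (hA : A ⊆ Set.Icc 0 1) :
    volume A ≤ ENNReal.ofReal (essM A) := by
  calc volume A ≤ volume (A ∩ Set.Icc 0 (essM A)) + volume (A \ Set.Icc 0 (essM A)) :=
        measure_le_inter_add_diff _ _ _
    _ = volume (A ∩ Set.Icc 0 (essM A)) := by rw [essM_null hA, add_zero]
    _ ≤ volume (Set.Icc 0 (essM A)) := measure_mono inter_subset_right
    _ = ENNReal.ofReal (essM A) := by rw [Real.volume_Icc, sub_zero]

lemma essM_slice_pos {A : Set ℝ} (hA : A ⊆ Set.Icc 0 1) (h0 : volume A ≠ 0)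
    {δ : ℝ} (hδ : 0 < δ) : volume (A ∩ Set.Ioi (essM A - δ)) ≠ 0 := by
  intro hz
  by_cases hcase : 0 ≤ essM A - δ
  · have hmem : essM A - δ ∈ {x : ℝ | 0 ≤ x ∧ volume (A \ Set.Icc 0 x) = 0} := by
      refine ⟨hcase, measure_mono_null ?_ hz⟩
      rintro x ⟨hx1, hx2⟩
      have hx0 : 0 ≤ x := (hA hx1).1
      exact ⟨hx1, lt_of_not_ge fun h => hx2 ⟨hx0, h⟩⟩
    have h := csInf_le essM_bdd hmem
    have : essM A ≤ essM A - δ := h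
    linarith
  · apply h0
    push_neg at hcase
    refine measure_mono_null ?_ hz
    intro x hx
    exact ⟨hx, lt_of_lt_of_le hcase (hA hx).1⟩

/-! ### Auxiliary: counting edges -/

lemma mem_edgesIn {n : ℕ} {S : Finset (Fin n)} {e : EdgeType n} :
    e ∈ edgesIn S ↔ e.val.1 ∈ S ∧ e.val.2 ∈ S := by simp [edgesIn]

open Finset in
lemma card_ltPairs {n : ℕ} (T : Finset (Fin n)) :
    ((T ×ˢ T).filter fun p => p.1 < p.2).card = T.card.choose 2 := by
  have hswap : ((T ×ˢ T).filter fun p => p.1 < p.2).card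
      = ((T ×ˢ T).filter fun p => p.2 < p.1).card := by
    apply Finset.card_bij (fun p _ => (p.2, p.1))
    · intro a ha; simp only [mem_filter, mem_product] at ha ⊢; exact ⟨⟨ha.1.2, ha.1.1⟩, ha.2⟩
    · intro a _ b _ h
      simpa [Prod.ext_iff, and_comm] using h
    · intro b hb
      simp only [mem_filter, mem_product] at hb
      exact ⟨(b.2, b.1), by simp only [mem_filter, mem_product]; exact ⟨⟨hb.1.2, hb.1.1⟩, hb.2⟩, rfl⟩
  have hdisj : Disjoint ((T ×ˢ T).filter fun p => p.1 < p.2)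
      ((T ×ˢ T).filter fun p => p.2 < p.1) := by
    rw [Finset.disjoint_left]
    intro p hp hq
    simp only [mem_filter] at hp hq
    exact absurd hq.2 (not_lt.2 (le_of_lt hp.2))
  have hunion : ((T ×ˢ T).filter fun p => p.1 < p.2) ∪ ((T ×ˢ T).filter fun p => p.2 < p.1)
      = T.offDiag := by
    ext p
    simp only [Finset.mem_union, Finset.mem_filter, Finset.mem_product, Finset.mem_offDiag]
    constructor
    · rintro (⟨⟨h1, h2⟩, h3⟩ | ⟨⟨h1, h2⟩, h3⟩)
      · exact ⟨h1, h2, ne_of_lt h3⟩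
      · exact ⟨h1, h2, (ne_of_lt h3).symm⟩
    · rintro ⟨h1, h2, h3⟩
      rcases lt_or_gt_of_ne h3 with h | h
      · exact Or.inl ⟨⟨h1, h2⟩, h⟩
      · exact Or.inr ⟨⟨h1, h2⟩, h⟩
  have hcard := congrArg Finset.card hunion
  rw [Finset.card_union_of_disjoint hdisj, ← hswap, Finset.offDiag_card] at hcard
  have hmul : T.card * (T.card - 1) = T.card * T.card - T.card := by
    cases T.card with
    | zero => rfl
    | succ k => simp [Nat.succ_sub_one, Nat.mul_succ, Nat.succ_mul]
  rw [Nat.choose_two_right]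
  omega

open Finset in
lemma card_edgesIn {n : ℕ} (S : Finset (Fin n)) : (edgesIn S).card = S.card.choose 2 := by
  rw [← card_ltPairs S]
  apply Finset.card_bij (fun (e : EdgeType n) _ => e.val)
  · intro e he
    rw [mem_edgesIn] at he
    simp only [mem_filter, mem_product]
    exact ⟨⟨he.1, he.2⟩, e.prop⟩
  · intro a _ b _ h; exact Subtype.ext h
  · intro p hp
    simp only [mem_filter, mem_product] at hp
    exact ⟨⟨p, hp.2⟩, mem_edgesIn.2 ⟨hp.1.1, hp.1.2⟩, rfl⟩

lemma card_edgeType (n : ℕ) : (Finset.univ : Finset (EdgeType n)).card = n.choose 2 := by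
  have h : (Finset.univ : Finset (EdgeType n)) = edgesIn Finset.univ := by
    ext e; simp [mem_edgesIn]
  rw [h, card_edgesIn, Finset.card_univ, Fintype.card_fin]

open Finset in
lemma card_contains {n s : ℕ} (hs : 2 ≤ s) (e : EdgeType n) :
    ((Finset.univ.powersetCard s).filter fun S : Finset (Fin n) => e ∈ edgesIn S).card
      = (n-2).choose (s-2) := by
  classical
  have hne : e.val.1 ≠ e.val.2 := ne_of_lt e.prop
  have hpair : ({e.val.1, e.val.2} : Finset (Fin n)).card = 2 := Finset.card_pair hne
  have hc : (Finset.univ \ ({e.val.1, e.val.2} : Finset (Fin n))).card = n - 2 := by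
    rw [Finset.card_sdiff_of_subset (Finset.subset_univ _), Finset.card_univ, Fintype.card_fin, hpair]
  rw [← hc, ← Finset.card_powersetCard (s-2) (Finset.univ \ ({e.val.1, e.val.2} : Finset (Fin n)))]
  apply Finset.card_bij' (fun S _ => S \ ({e.val.1, e.val.2} : Finset (Fin n)))
      (fun T _ => T ∪ ({e.val.1, e.val.2} : Finset (Fin n)))
  · intro S hS
    simp only [mem_filter, Finset.mem_powersetCard] at hS
    obtain ⟨⟨_, hcard⟩, hmem⟩ := hS
    rw [mem_edgesIn] at hmem
    rw [Finset.mem_powersetCard]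
    constructor
    · exact Finset.sdiff_subset_sdiff (Finset.subset_univ _) (le_refl _)
    · rw [Finset.card_sdiff_of_subset (by
        intro x hx
        simp only [Finset.mem_insert, Finset.mem_singleton] at hx
        rcases hx with rfl | rfl
        · exact hmem.1
        · exact hmem.2), hcard, hpair]
  · intro T hT
    rw [Finset.mem_powersetCard] at hT
    obtain ⟨hsub, hcard⟩ := hT
    have hdisj : Disjoint T ({e.val.1, e.val.2} : Finset (Fin n)) := by
      rw [Finset.disjoint_right]
      intro a ha haT
      exact (Finset.mem_sdiff.1 (hsub haT)).2 ha
    simp only [mem_filter, Finset.mem_powersetCard]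
    refine ⟨⟨Finset.subset_univ _, ?_⟩, ?_⟩
    · rw [Finset.card_union_of_disjoint hdisj, hcard, hpair]
      omega
    · rw [mem_edgesIn]
      constructor
      · exact Finset.mem_union_right _ (by simp)
      · exact Finset.mem_union_right _ (by simp)
  · intro S hS
    simp only [mem_filter, Finset.mem_powersetCard] at hS
    obtain ⟨_, hmem⟩ := hS
    rw [mem_edgesIn] at hmem
    apply Finset.sdiff_union_of_subset
    intro x hx
    simp only [Finset.mem_insert, Finset.mem_singleton] at hx
    rcases hx with rfl | rfl
    · exact hmem.1
    · exact hmem.2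
  · intro T hT
    rw [Finset.mem_powersetCard] at hT
    have hdisj : Disjoint T ({e.val.1, e.val.2} : Finset (Fin n)) := by
      rw [Finset.disjoint_right]
      intro a ha haT
      exact (Finset.mem_sdiff.1 (hT.1 haT)).2 ha
    rw [Finset.union_sdiff_distrib, Finset.sdiff_self, Finset.union_empty,
      Finset.sdiff_eq_self_of_disjoint hdisj]

/-! ### Auxiliary: analytic product bound -/

lemma le_c_exp {c t : ℝ} (hc : 0 < c) : t ≤ c * Real.exp (t/c - 1) := by
  have h := Real.add_one_le_exp (t/c - 1)
  have h2 : t/c ≤ Real.exp (t/c - 1) := by linarith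
  calc t = c * (t/c) := by field_simp
    _ ≤ c * Real.exp (t/c - 1) := mul_le_mul_of_nonneg_left h2 hc.le

lemma lt_c_exp {c t : ℝ} (hc : 0 < c) (hne : t ≠ c) : t < c * Real.exp (t/c - 1) := by
  have hx : t/c - 1 ≠ 0 := by
    intro h
    apply hne
    field_simp at h
    linarith
  have h := Real.add_one_lt_exp hx
  have h2 : t/c < Real.exp (t/c - 1) := by linarith
  calc t = c * (t/c) := by field_simp
    _ < c * Real.exp (t/c - 1) := mul_lt_mul_of_pos_left h2 hc

lemma prod_le_pow_of_sum_le {ι : Type} [Fintype ι] {c : ℝ} (hc : 0 < c) (M : ι → ℝ)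
    (hM0 : ∀ e, 0 ≤ M e) (hsum : ∑ e, M e ≤ (Fintype.card ι : ℝ) * c) :
    (∏ e, M e ≤ c ^ (Fintype.card ι)) ∧
    ((∏ e, M e = c ^ (Fintype.card ι)) → ∀ e, M e = c) := by
  have hle1 : ∏ e, M e ≤ ∏ e, c * Real.exp (M e / c - 1) :=
    Finset.prod_le_prod (fun e _ => hM0 e) (fun e _ => le_c_exp hc)
  have hprod : ∏ e : ι, (c * Real.exp (M e / c - 1))
      = c ^ (Fintype.card ι) * Real.exp (∑ e, M e / c - Fintype.card ι) := by
    rw [Finset.prod_mul_distrib, Finset.prod_const, Finset.card_univ, ← Real.exp_sum]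
    congr 1
    rw [Finset.sum_sub_distrib, Finset.sum_const, Finset.card_univ, nsmul_eq_mul, mul_one]
  have hexp : Real.exp (∑ e, M e / c - Fintype.card ι) ≤ 1 := by
    rw [← Real.exp_zero]
    apply Real.exp_le_exp.2
    have h : ∑ e, M e / c = (∑ e, M e) / c := by rw [Finset.sum_div]
    rw [h, sub_nonpos, div_le_iff₀ hc]
    nlinarith [hsum]
  have hle2 : ∏ e, (c * Real.exp (M e / c - 1)) ≤ c ^ (Fintype.card ι) := by
    rw [hprod]
    calc c ^ (Fintype.card ι) * Real.exp (∑ e, M e / c - Fintype.card ι)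
        ≤ c ^ (Fintype.card ι) * 1 := mul_le_mul_of_nonneg_left hexp (pow_nonneg hc.le _)
      _ = c ^ (Fintype.card ι) := mul_one _
  refine ⟨hle1.trans hle2, fun heq e => ?_⟩
  by_contra hne
  have hpos : ∀ i, 0 < M i := by
    intro i
    rcases (hM0 i).lt_or_eq with h | h
    · exact h
    · exfalso
      have h0 : ∏ e, M e = 0 := Finset.prod_eq_zero (Finset.mem_univ i) h.symm
      rw [heq] at h0
      exact absurd h0 (ne_of_gt (pow_pos hc _))
  have hstrict : ∏ e, M e < ∏ e, c * Real.exp (M e / c - 1) := by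
    apply Finset.prod_lt_prod (fun i _ => hpos i) (fun i _ => le_c_exp hc)
    exact ⟨e, Finset.mem_univ e, lt_c_exp hc hne⟩
  rw [heq] at hstrict
  exact absurd (hstrict.trans_le hle2) (lt_irrefl _)

/-! ### Core measure-theoretic lemma -/

lemma core_sum_bound {n s : ℕ} {r : ℝ}
    (A : EdgeType n → Set ℝ) (hAm : ∀ e, MeasurableSet (A e))
    (hAsub : ∀ e, A e ⊆ Set.Icc 0 1)
    (hnull : volume (Set.univ.pi A \ weightedProp n s r) = 0)
    (hpos : ∀ e, volume (A e) ≠ 0)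
    (S : Finset (Fin n)) (hS : S.card = s) :
    ∑ e ∈ edgesIn S, essM (A e) ≤ r := by
  classical
  refine le_of_forall_pos_le_add fun ε hε => ?_
  set δ := ε / ((edgesIn S).card + 1) with hδdef
  have hδ : 0 < δ := by positivity
  set A' : EdgeType n → Set ℝ :=
    fun e => if e ∈ edgesIn S then A e ∩ Set.Ioi (essM (A e) - δ) else A e with hA'
  have hA'pos : ∀ e, volume (A' e) ≠ 0 := fun e => by
    by_cases h : e ∈ edgesIn S
    · simpa [hA', h] using essM_slice_pos (hAsub e) (hpos e) hδ
    · simpa [hA', h] using hpos e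
  have hA'sub : ∀ e, A' e ⊆ A e := fun e => by
    by_cases h : e ∈ edgesIn S <;> simp [hA', h, Set.inter_subset_left]
  have hb'b : Set.univ.pi A' ⊆ Set.univ.pi A := Set.pi_mono fun e _ => hA'sub e
  have hvol : volume (Set.univ.pi A') ≠ 0 := by
    rw [volume_pi_pi]
    rw [Finset.prod_ne_zero_iff]
    exact fun e _ => hA'pos e
  have hnull' : volume (Set.univ.pi A' \ weightedProp n s r) = 0 :=
    measure_mono_null (Set.diff_subset_diff_left hb'b) hnull
  have hex : (Set.univ.pi A' ∩ weightedProp n s r).Nonempty := by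
    by_contra h
    rw [Set.not_nonempty_iff_eq_empty] at h
    apply hvol
    refine measure_mono_null ?_ hnull'
    intro x hx
    exact ⟨hx, fun hP => Set.eq_empty_iff_forall_notMem.1 h x ⟨hx, hP⟩⟩
  obtain ⟨w, hw, hwP⟩ := hex
  have hsumw : ∑ e ∈ edgesIn S, w e ≤ r := hwP.2 S hS
  have hge : ∀ e ∈ edgesIn S, essM (A e) - δ ≤ w e := by
    intro e he
    have hmem := hw e (Set.mem_univ e)
    rw [hA'] at hmem
    simp only [he, if_true] at hmem
    exact le_of_lt hmem.2
  have hsum := Finset.sum_le_sum hge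
  rw [Finset.sum_sub_distrib, Finset.sum_const, nsmul_eq_mul] at hsum
  have hkd : ((edgesIn S).card : ℝ) * δ ≤ ε := by
    rw [hδdef]
    have h1 : (0:ℝ) < ((edgesIn S).card : ℝ) + 1 := by positivity
    calc ((edgesIn S).card : ℝ) * (ε / ((edgesIn S).card + 1))
        = ε * (((edgesIn S).card : ℝ) / (((edgesIn S).card : ℝ) + 1)) := by ring
      _ ≤ ε * 1 := mul_le_mul_of_nonneg_left ((div_le_one h1).2 (by linarith)) hε.le
      _ = ε := mul_one ε
  linarith

/-! ### Double counting -/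

lemma sum_bound_global {n s : ℕ} (hs : 2 ≤ s) (hn : s ≤ n) {r : ℝ}
    (M : EdgeType n → ℝ)
    (h : ∀ S : Finset (Fin n), S.card = s → ∑ e ∈ edgesIn S, M e ≤ r) :
    ∑ e, M e ≤ (n.choose 2 : ℝ) * (r / (s.choose 2 : ℝ)) := by
  classical
  have key : ∑ S ∈ Finset.univ.powersetCard s, ∑ e ∈ edgesIn S, M e
      = ((n-2).choose (s-2) : ℝ) * ∑ e, M e := by
    have h1 : ∀ S : Finset (Fin n), ∑ e ∈ edgesIn S, M e
        = ∑ e : EdgeType n, if e ∈ edgesIn S then M e else 0 := by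
      intro S
      rw [← Finset.sum_filter, Finset.filter_mem_eq_inter, Finset.univ_inter]
    calc ∑ S ∈ Finset.univ.powersetCard s, ∑ e ∈ edgesIn S, M e
        = ∑ S ∈ Finset.univ.powersetCard s, ∑ e : EdgeType n,
            if e ∈ edgesIn S then M e else 0 := Finset.sum_congr rfl fun S _ => h1 S
      _ = ∑ e : EdgeType n, ∑ S ∈ Finset.univ.powersetCard s,
            if e ∈ edgesIn S then M e else 0 := Finset.sum_comm
      _ = ∑ e : EdgeType n, ((n-2).choose (s-2) : ℝ) * M e := by
          refine Finset.sum_congr rfl fun e _ => ?_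
          rw [← Finset.sum_filter, Finset.sum_const, card_contains hs e, nsmul_eq_mul]
      _ = ((n-2).choose (s-2) : ℝ) * ∑ e, M e := by rw [Finset.mul_sum]
  have hle : ∑ S ∈ Finset.univ.powersetCard s, ∑ e ∈ edgesIn S, M e
      ≤ (n.choose s : ℝ) * r := by
    calc ∑ S ∈ Finset.univ.powersetCard s, ∑ e ∈ edgesIn S, M e
        ≤ ∑ _S ∈ Finset.univ.powersetCard s, r := by
          refine Finset.sum_le_sum fun S hS => ?_
          exact h S (Finset.mem_powersetCard.1 hS).2
      _ = (n.choose s : ℝ) * r := by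
          rw [Finset.sum_const, Finset.card_powersetCard, Finset.card_univ, Fintype.card_fin,
            nsmul_eq_mul]
  rw [key] at hle
  have hid : (n.choose s) * (s.choose 2) = (n.choose 2) * ((n-2).choose (s-2)) :=
    Nat.choose_mul hs
  have hcast : (n.choose s : ℝ) * (s.choose 2 : ℝ)
      = (n.choose 2 : ℝ) * ((n-2).choose (s-2) : ℝ) := by exact_mod_cast hid
  have ha : (0:ℝ) < ((n-2).choose (s-2) : ℝ) := by
    exact_mod_cast Nat.choose_pos (by omega : s - 2 ≤ n - 2)
  have hq : (0:ℝ) < ((s.choose 2 : ℕ) : ℝ) := by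
    exact_mod_cast Nat.choose_pos hs
  rw [← mul_le_mul_iff_right₀ ha]
  have heq : ((n-2).choose (s-2) : ℝ) * ((n.choose 2 : ℝ) * (r / (s.choose 2 : ℝ)))
      = (n.choose s : ℝ) * r := by
    field_simp
    linear_combination (-r) * hcast
  rw [heq]
  exact hle

/-! ### Main theorem -/

/-- **Theorem (extremal entropy for weighted graphs).**
For `s ≥ 2`, `r ∈ (0, C(s,2)]` and `n ≥ s`:
`ex(E(K_n), P_n(s,r)) = C(n,2) log (C(s,2)/r)`, i.e. every box `b` with
`vol(b \ P_n(s,r)) = 0` has `vol(b) ≤ (r/C(s,2))^{C(n,2)}`; the bound is attained by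
the box `[0, r/C(s,2)]^{E(K_n)}`, and uniquely so up to zero-measure sets. -/
theorem extremal_entropy_weighted_graphs
    (s : ℕ) (hs : 2 ≤ s) (r : ℝ) (hr : r ∈ Set.Ioc (0:ℝ) (s.choose 2 : ℝ))
    (n : ℕ) (hn : s ≤ n) :
    (∀ b : Set (EdgeType n → ℝ), IsBox b → volume (b \ weightedProp n s r) = 0 →
      volume b ≤ ENNReal.ofReal ((r / (s.choose 2 : ℝ)) ^ (n.choose 2))) ∧
    (Set.univ.pi (fun _ : EdgeType n => Set.Icc (0:ℝ) (r / (s.choose 2 : ℝ))) ⊆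
      weightedProp n s r) ∧
    volume (Set.univ.pi (fun _ : EdgeType n => Set.Icc (0:ℝ) (r / (s.choose 2 : ℝ)))) =
      ENNReal.ofReal ((r / (s.choose 2 : ℝ)) ^ (n.choose 2)) ∧
    (∀ b : Set (EdgeType n → ℝ), IsBox b → volume (b \ weightedProp n s r) = 0 →
      volume b = ENNReal.ofReal ((r / (s.choose 2 : ℝ)) ^ (n.choose 2)) →
      volume ((b \ Set.univ.pi (fun _ : EdgeType n => Set.Icc (0:ℝ) (r / (s.choose 2 : ℝ)))) ∪
        (Set.univ.pi (fun _ : EdgeType n => Set.Icc (0:ℝ) (r / (s.choose 2 : ℝ))) \ b)) = 0) := by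
  classical
  obtain ⟨hr0, hrq⟩ := hr
  have hq : (0:ℝ) < ((s.choose 2 : ℕ) : ℝ) := by exact_mod_cast Nat.choose_pos hs
  set c : ℝ := r / (s.choose 2 : ℝ) with hcdef
  have hc0 : 0 < c := div_pos hr0 hq
  have hc1 : c ≤ 1 := by rw [hcdef, div_le_one hq]; exact hrq
  have hcardE : (Fintype.card (EdgeType n) : ℕ) = n.choose 2 := by
    rw [← Finset.card_univ, card_edgeType]
  -- the upper bound (shared by the first and last bullet)
  have main : ∀ A : EdgeType n → Set ℝ, (∀ i, MeasurableSet (A i) ∧ A i ⊆ Set.Icc 0 1) →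
      volume (Set.univ.pi A \ weightedProp n s r) = 0 → (∀ e, volume (A e) ≠ 0) →
      (∏ e, essM (A e) ≤ c ^ (n.choose 2)) ∧
      ((∏ e, essM (A e) = c ^ (n.choose 2)) → ∀ e, essM (A e) = c) := by
    intro A hA hnull hpos
    have hcore : ∀ S : Finset (Fin n), S.card = s → ∑ e ∈ edgesIn S, essM (A e) ≤ r :=
      core_sum_bound A (fun e => (hA e).1) (fun e => (hA e).2) hnull hpos
    have hsumM : ∑ e, essM (A e) ≤ (n.choose 2 : ℝ) * c :=
      sum_bound_global hs hn _ hcore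
    have := prod_le_pow_of_sum_le hc0 (fun e => essM (A e))
      (fun e => essM_nonneg (hA e).2) (by rw [hcardE]; exact hsumM)
    rw [hcardE] at this
    exact this
  refine ⟨?_, ?_, ?_, ?_⟩
  -- 1. upper bound
  · rintro b ⟨A, hA, rfl⟩ hnull
    rw [volume_pi_pi]
    by_cases hz : ∃ e, volume (A e) = 0
    · obtain ⟨e, he⟩ := hz
      rw [Finset.prod_eq_zero (Finset.mem_univ e) he]
      exact zero_le
    · push_neg at hz
      obtain ⟨hprod, -⟩ := main A hA hnull hz
      calc ∏ e, volume (A e) ≤ ∏ e, ENNReal.ofReal (essM (A e)) :=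
            Finset.prod_le_prod' fun e _ => volume_le_essM (hA e).2
        _ = ENNReal.ofReal (∏ e, essM (A e)) := by
            rw [ENNReal.ofReal_prod_of_nonneg fun e _ => essM_nonneg (hA e).2]
        _ ≤ ENNReal.ofReal (c ^ (n.choose 2)) := ENNReal.ofReal_le_ofReal hprod
  -- 2. the optimal box satisfies the property
  · intro w hw
    rw [Set.mem_pi] at hw
    constructor
    · intro e
      have := hw e (Set.mem_univ e)
      exact ⟨this.1, this.2.trans hc1⟩
    · intro S hS
      calc ∑ e ∈ edgesIn S, w e ≤ ∑ _e ∈ edgesIn S, c :=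
            Finset.sum_le_sum fun e _ => (hw e (Set.mem_univ e)).2
        _ = ((s.choose 2 : ℕ) : ℝ) * c := by
            rw [Finset.sum_const, card_edgesIn, hS, nsmul_eq_mul]
        _ = r := by rw [hcdef]; field_simp
  -- 3. volume of the optimal box
  · rw [volume_pi_pi]
    simp only [Real.volume_Icc, sub_zero]
    rw [Finset.prod_const, Finset.card_univ, hcardE, ← ENNReal.ofReal_pow hc0.le]
  -- 4. uniqueness
  · rintro b ⟨A, hA, rfl⟩ hnull hvol
    have hvolp : ∏ e, volume (A e) = ENNReal.ofReal (c ^ (n.choose 2)) := by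
      rw [← volume_pi_pi]; exact hvol
    have hcne : ENNReal.ofReal (c ^ (n.choose 2)) ≠ 0 := by
      simp only [ne_eq, ENNReal.ofReal_eq_zero, not_le]
      positivity
    have hz : ∀ e, volume (A e) ≠ 0 := by
      intro e he
      exact hcne (by rw [← hvolp, Finset.prod_eq_zero (Finset.mem_univ e) he])
    obtain ⟨hprodle, heqcase⟩ := main A hA hnull hz
    -- product of essM equals c ^ m
    have hprodM : ∏ e, essM (A e) = c ^ (n.choose 2) := by
      refine le_antisymm hprodle ?_
      have h1 : ENNReal.ofReal (c ^ (n.choose 2)) ≤ ENNReal.ofReal (∏ e, essM (A e)) := by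
        rw [← hvolp, ENNReal.ofReal_prod_of_nonneg fun e _ => essM_nonneg (hA e).2]
        exact Finset.prod_le_prod' fun e _ => volume_le_essM (hA e).2
      exact (ENNReal.ofReal_le_ofReal_iff
        (Finset.prod_nonneg fun e _ => essM_nonneg (hA e).2)).1 h1
    have hMc : ∀ e, essM (A e) = c := heqcase hprodM
    -- each coordinate has full volume
    have hvole : ∀ e, volume (A e) = ENNReal.ofReal c := by
      by_contra h
      push_neg at h
      obtain ⟨e0, he0⟩ := h
      have hle : ∀ e, volume (A e) ≤ ENNReal.ofReal c := fun e => by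
        have := volume_le_essM (hA e).2
        rwa [hMc e] at this
      have hlt : volume (A e0) < ENNReal.ofReal c := lt_of_le_of_ne (hle e0) he0
      have hXne : (∏ e ∈ Finset.univ.erase e0, ENNReal.ofReal c) ≠ 0 := by
        rw [Finset.prod_ne_zero_iff]
        intro e _
        simp only [ne_eq, ENNReal.ofReal_eq_zero, not_le]
        exact hc0
      have hXtop : (∏ e ∈ Finset.univ.erase e0, ENNReal.ofReal c) ≠ ⊤ :=
        ENNReal.prod_ne_top fun e _ => ENNReal.ofReal_ne_top
      have hstrict : ∏ e, volume (A e) < ∏ _e : EdgeType n, ENNReal.ofReal c := by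
        rw [← Finset.mul_prod_erase Finset.univ _ (Finset.mem_univ e0),
          ← Finset.mul_prod_erase Finset.univ (fun _ => ENNReal.ofReal c) (Finset.mem_univ e0)]
        calc volume (A e0) * ∏ e ∈ Finset.univ.erase e0, volume (A e)
            ≤ volume (A e0) * ∏ e ∈ Finset.univ.erase e0, ENNReal.ofReal c := by
              exact mul_le_mul_right (Finset.prod_le_prod' fun e _ => hle e) _
          _ < ENNReal.ofReal c * ∏ e ∈ Finset.univ.erase e0, ENNReal.ofReal c := by
              exact (ENNReal.mul_lt_mul_iff_left hXne hXtop).2 hlt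
      rw [hvolp, Finset.prod_const, Finset.card_univ, hcardE,
        ← ENNReal.ofReal_pow hc0.le] at hstrict
      exact absurd hstrict (lt_irrefl _)
    -- coordinatewise null sets
    have hsub1 : ∀ e, volume (A e \ Set.Icc 0 c) = 0 := fun e => by
      have := essM_null (hA e).2
      rwa [hMc e] at this
    have hsub2 : ∀ e, volume (Set.Icc 0 c \ A e) = 0 := by
      intro e
      have hinterge : ENNReal.ofReal c ≤ volume (Set.Icc 0 c ∩ A e) := by
        rw [Set.inter_comm]
        calc ENNReal.ofReal c = volume (A e) := (hvole e).symm
          _ ≤ volume (A e ∩ Set.Icc 0 c) + volume (A e \ Set.Icc 0 c) :=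
              measure_le_inter_add_diff _ _ _
          _ = volume (A e ∩ Set.Icc 0 c) := by rw [hsub1 e, add_zero]
      have hinterle : volume (Set.Icc 0 c ∩ A e) ≤ ENNReal.ofReal c := by
        calc volume (Set.Icc 0 c ∩ A e) ≤ volume (Set.Icc (0:ℝ) c) :=
              measure_mono Set.inter_subset_left
          _ = ENNReal.ofReal c := by rw [Real.volume_Icc, sub_zero]
      have hinter : volume (Set.Icc 0 c ∩ A e) = ENNReal.ofReal c :=
        le_antisymm hinterle hinterge
      have hrw : Set.Icc 0 c \ A e = Set.Icc 0 c \ (Set.Icc 0 c ∩ A e) := by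
        rw [Set.diff_self_inter]
      rw [hrw, measure_diff Set.inter_subset_left
        ((measurableSet_Icc.inter (hA e).1).nullMeasurableSet)
        (by rw [hinter]; exact ENNReal.ofReal_ne_top),
        hinter, Real.volume_Icc, sub_zero, tsub_self]
    -- conclude
    have hcyl1 : ∀ e : EdgeType n,
        volume (Function.eval e ⁻¹' (A e \ Set.Icc 0 c) : Set (EdgeType n → ℝ)) = 0 := by
      intro e
      rw [volume_pi]
      exact MeasureTheory.Measure.pi_eval_preimage_null _ (hsub1 e)
    have hcyl2 : ∀ e : EdgeType n,
        volume (Function.eval e ⁻¹' (Set.Icc 0 c \ A e) : Set (EdgeType n → ℝ)) = 0 := by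
      intro e
      rw [volume_pi]
      exact MeasureTheory.Measure.pi_eval_preimage_null _ (hsub2 e)
    refine measure_union_null ?_ ?_
    · refine measure_mono_null ?_ (measure_iUnion_null hcyl1)
      intro w hw
      obtain ⟨hwb, hwn⟩ := hw
      rw [Set.mem_pi] at hwn
      push_neg at hwn
      obtain ⟨e, -, he⟩ := hwn
      exact Set.mem_iUnion.2 ⟨e, hwb e (Set.mem_univ e), he⟩
    · refine measure_mono_null ?_ (measure_iUnion_null hcyl2)
      intro w hw
      obtain ⟨hwb, hwn⟩ := hw
      rw [Set.mem_pi] at hwn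
      push_neg at hwn
      obtain ⟨e, -, he⟩ := hwn
      exact Set.mem_iUnion.2 ⟨e, hwb e (Set.mem_univ e), he⟩

end
end

section
/- Let Q_n := {0,1}^n and, for N ≤ n, let binom(Q_n, Q_N) be the collection of maps φ_{u,S} : Q_N → Q_n indexed by u ∈ {0,1}^n and sets S = {s_1 < s_2 < … < s_N} ⊆ [n], where φ_{u,S}(v)_i = v_j if i = s_j and φ_{u,S}(v)_i = u_i otherwise. Then every φ_{u,S} is injective, and this data constitutes a good homogeneous ssee; in particular: (i) |Q_n| → ∞; (ii) for every N ≥ 1, |binom(Q_n,Q_N)|/|Q_n| → ∞; (iii) for every N ≥ 1, |Q_n|·I(N,n)/|binom(Q_n,Q_N)|² → 0 as n → ∞; and for every n ≥ N, every x ∈ Q_n is contained in the same strictly positive number of images φ(Q_N) over φ ∈ binom(Q_n,Q_N). -/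
open Filter Set

noncomputable section

/-- The count `I(N,n)` specialised to a finset `E` of maps `α → β`: the number of
pairs of maps in `E` whose images intersect in exactly `i` elements, summed over
`1 < i < |α|`. -/
def interCountF {α β : Type} [Fintype α] [DecidableEq β] (E : Finset (α → β)) : ℕ :=
  ((E ×ˢ E).filter (fun p =>
    1 < ((Finset.univ.image p.1) ∩ (Finset.univ.image p.2)).card ∧
    ((Finset.univ.image p.1) ∩ (Finset.univ.image p.2)).card < Fintype.card α)).card

/-- The embedding `φ_{u,S} : Q_N → Q_n` determined by a base point `u ∈ {0,1}^n` and
a coordinate set `S ⊆ [n]` with `|S| = N`: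
`φ_{u,S}(v)_i = v_j` if `i = s_j` (the `j`-th smallest element of `S`), else `u_i`. -/
def cubeEmb {N n : ℕ} (u : Fin n → Bool) (S : Finset (Fin n)) (hS : S.card = N) :
    (Fin N → Bool) → (Fin n → Bool) :=
  fun v i => if h : i ∈ S then v ((S.orderIsoOfFin hS).symm ⟨i, h⟩) else u i

/-- The collection of embeddings `binom(Q_n, Q_N)`. -/
def cubeEmbs (N n : ℕ) : Finset ((Fin N → Bool) → (Fin n → Bool)) :=
  (((Finset.univ : Finset (Fin n)).powersetCard N).attach ×ˢ
      (Finset.univ : Finset (Fin n → Bool))).image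
    (fun p => cubeEmb p.2 p.1.1 (Finset.mem_powersetCard.mp p.1.2).2)

def freeSet {N n : ℕ} (φ : (Fin N → Bool) → (Fin n → Bool)) : Finset (Fin n) :=
  Finset.univ.filter fun i => φ (fun _ => true) i ≠ φ (fun _ => false) i

lemma cubeEmb_apply_mem {N n : ℕ} (u : Fin n → Bool) (S : Finset (Fin n)) (hS : S.card = N)
    (v : Fin N → Bool) {i : Fin n} (h : i ∈ S) :
    cubeEmb u S hS v i = v ((S.orderIsoOfFin hS).symm ⟨i, h⟩) := dif_pos h

lemma cubeEmb_apply_not_mem {N n : ℕ} (u : Fin n → Bool) (S : Finset (Fin n)) (hS : S.card = N)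
    (v : Fin N → Bool) {i : Fin n} (h : i ∉ S) :
    cubeEmb u S hS v i = u i := dif_neg h

lemma cubeEmb_inj {N n : ℕ} (u : Fin n → Bool) (S : Finset (Fin n)) (hS : S.card = N) :
    Function.Injective (cubeEmb u S hS) := by
  intro v w h
  funext j
  have h2 := congrFun h ((S.orderIsoOfFin hS) j : Fin n)
  rw [cubeEmb_apply_mem u S hS v ((S.orderIsoOfFin hS) j).2,
    cubeEmb_apply_mem u S hS w ((S.orderIsoOfFin hS) j).2, Subtype.coe_eta,
    OrderIso.symm_apply_apply] at h2
  exact h2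

lemma freeSet_cubeEmb {N n : ℕ} (u : Fin n → Bool) (S : Finset (Fin n)) (hS : S.card = N) :
    freeSet (cubeEmb u S hS) = S := by
  ext i
  simp only [freeSet, Finset.mem_filter, Finset.mem_univ, true_and]
  by_cases h : i ∈ S
  · simp [cubeEmb_apply_mem _ _ _ _ h, h]
  · simp [cubeEmb_apply_not_mem _ _ _ _ h, h]

lemma cubeEmb_set_congr {N n : ℕ} (u : Fin n → Bool) {S T : Finset (Fin n)} (hST : S = T)
    (hS : S.card = N) (hT : T.card = N) : cubeEmb u S hS = cubeEmb u T hT := by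
  subst hST; rfl

lemma cubeEmb_congr {N n : ℕ} {u u' : Fin n → Bool} {S : Finset (Fin n)} {hS hS' : S.card = N}
    (h : ∀ i ∉ S, u i = u' i) : cubeEmb u S hS = cubeEmb u' S hS' := by
  funext v i
  by_cases hi : i ∈ S
  · rw [cubeEmb_apply_mem _ _ _ _ hi, cubeEmb_apply_mem _ _ _ _ hi]
  · rw [cubeEmb_apply_not_mem _ _ _ _ hi, cubeEmb_apply_not_mem _ _ _ _ hi, h i hi]

lemma mem_image_cubeEmb_iff {N n : ℕ} (u : Fin n → Bool) (S : Finset (Fin n)) (hS : S.card = N)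
    (x : Fin n → Bool) :
    x ∈ Finset.univ.image (cubeEmb u S hS) ↔ ∀ i ∉ S, x i = u i := by
  simp only [Finset.mem_image, Finset.mem_univ, true_and]
  constructor
  · rintro ⟨v, rfl⟩ i hi
    exact cubeEmb_apply_not_mem _ _ _ _ hi
  · intro hx
    refine ⟨fun j => x ((S.orderIsoOfFin hS) j), ?_⟩
    funext i
    by_cases hi : i ∈ S
    · rw [cubeEmb_apply_mem _ _ _ _ hi]
      congr 1
      exact congrArg Subtype.val ((S.orderIsoOfFin hS).apply_symm_apply ⟨i, hi⟩)
    · rw [cubeEmb_apply_not_mem _ _ _ _ hi, hx i hi]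

lemma mem_cubeEmbs {N n : ℕ} (u : Fin n → Bool) (S : Finset (Fin n)) (hS : S.card = N) :
    cubeEmb u S hS ∈ cubeEmbs N n := by
  have hmem : S ∈ (Finset.univ : Finset (Fin n)).powersetCard N :=
    Finset.mem_powersetCard.mpr ⟨Finset.subset_univ S, hS⟩
  refine Finset.mem_image.mpr ⟨(⟨S, hmem⟩, u), ?_, rfl⟩
  simp [Finset.mem_product]

lemma recon {N n : ℕ} (φ : (Fin N → Bool) → (Fin n → Bool)) (hφ : φ ∈ cubeEmbs N n) :
    ∃ h : (freeSet φ).card = N, φ = cubeEmb (φ fun _ => false) (freeSet φ) h := by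
  obtain ⟨⟨⟨S, hSmem⟩, u⟩, -, rfl⟩ := Finset.mem_image.mp hφ
  obtain ⟨-, hS⟩ := Finset.mem_powersetCard.mp hSmem
  have hfs : freeSet (cubeEmb u S hS) = S := freeSet_cubeEmb u S hS
  have hcard : (freeSet (cubeEmb u S hS)).card = N := by rw [hfs]; exact hS
  refine ⟨hcard, ?_⟩
  rw [cubeEmb_set_congr _ hfs hcard hS]
  exact cubeEmb_congr (fun i hi => (cubeEmb_apply_not_mem u S hS _ hi).symm)

lemma card_fixed_on {n : ℕ} (S : Finset (Fin n)) :
    (Finset.univ.filter fun u : Fin n → Bool => ∀ i ∈ S, u i = false).card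
      = 2 ^ (n - S.card) := by
  have e : {u : Fin n → Bool // ∀ i ∈ S, u i = false} ≃ ({i : Fin n // i ∉ S} → Bool) :=
    { toFun := fun u i => u.1 i.1
      invFun := fun w => ⟨fun i => if h : i ∈ S then false else w ⟨i, h⟩, by
        intro i hi; simp [hi]⟩
      left_inv := by
        rintro ⟨u, hu⟩
        ext i
        by_cases h : i ∈ S
        · simp [h, (hu i h).symm]
        · simp [h]
      right_inv := by
        intro w; funext i; simp [i.2] }
  have h1 : (Finset.univ.filter fun u : Fin n → Bool => ∀ i ∈ S, u i = false).card
      = Fintype.card {u : Fin n → Bool // ∀ i ∈ S, u i = false} :=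
    (Fintype.card_subtype _).symm
  rw [h1, Fintype.card_congr e, Fintype.card_fun, Fintype.card_bool, Fintype.card_subtype]
  congr 1
  rw [show Finset.univ.filter (fun i : Fin n => i ∉ S) = Sᶜ by ext i; simp,
    Finset.card_compl, Fintype.card_fin]

lemma card_univ_fun (n : ℕ) : (Finset.univ : Finset (Fin n → Bool)).card = 2 ^ n := by
  rw [Finset.card_univ, Fintype.card_fun, Fintype.card_bool, Fintype.card_fin]

lemma card_cubeEmbs_ub (N n : ℕ) : (cubeEmbs N n).card ≤ n.choose N * 2 ^ n := by
  refine le_trans Finset.card_image_le ?_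
  rw [Finset.card_product, Finset.card_attach, Finset.card_powersetCard, Finset.card_univ,
    Fintype.card_fin, card_univ_fun]

lemma card_cubeEmbs_lb {N n : ℕ} :
    n.choose N * 2 ^ (n - N) ≤ (cubeEmbs N n).card := by
  classical
  set D : Finset (Finset (Fin n) × (Fin n → Bool)) :=
    ((Finset.univ : Finset (Fin n)).powersetCard N).biUnion
      (fun S => ({S} : Finset (Finset (Fin n))) ×ˢ
        (Finset.univ.filter fun u => ∀ i ∈ S, u i = false)) with hD
  have hdisj : (((Finset.univ : Finset (Fin n)).powersetCard N) : Set (Finset (Fin n))).PairwiseDisjoint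
      (fun S => ({S} : Finset (Finset (Fin n))) ×ˢ
        (Finset.univ.filter fun u : Fin n → Bool => ∀ i ∈ S, u i = false)) := by
    intro S hS T hT hST
    refine Finset.disjoint_left.mpr ?_
    intro p hp hq
    rw [Finset.mem_product, Finset.mem_singleton] at hp hq
    exact hST (hp.1.symm.trans hq.1)
  have hcardD : D.card = n.choose N * 2 ^ (n - N) := by
    rw [hD, Finset.card_biUnion hdisj]
    have : ∀ S ∈ (Finset.univ : Finset (Fin n)).powersetCard N,
        (({S} : Finset (Finset (Fin n))) ×ˢ
          (Finset.univ.filter fun u : Fin n → Bool => ∀ i ∈ S, u i = false)).card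
        = 2 ^ (n - N) := by
      intro S hS
      rw [Finset.card_product, Finset.card_singleton, one_mul, card_fixed_on,
        (Finset.mem_powersetCard.mp hS).2]
    rw [Finset.sum_congr rfl this, Finset.sum_const, Finset.card_powersetCard,
      Finset.card_univ, Fintype.card_fin, smul_eq_mul]
  rw [← hcardD]
  have hg : ∀ p ∈ D, p.1.card = N := by
    intro p hp
    rw [hD, Finset.mem_biUnion] at hp
    obtain ⟨S, hS, hp⟩ := hp
    rw [Finset.mem_product, Finset.mem_singleton] at hp
    rw [hp.1]
    exact (Finset.mem_powersetCard.mp hS).2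
  have hfix : ∀ p ∈ D, ∀ i ∈ p.1, p.2 i = false := by
    intro p hp
    rw [hD, Finset.mem_biUnion] at hp
    obtain ⟨S, hS, hp⟩ := hp
    rw [Finset.mem_product, Finset.mem_singleton, Finset.mem_filter] at hp
    rw [hp.1]
    exact hp.2.2
  refine Finset.card_le_card_of_injOn
    (fun p => if h : p.1.card = N then cubeEmb p.2 p.1 h else (fun _ _ => false)) ?_ ?_
  · intro p hp
    simp only [dif_pos (hg p hp)]
    exact mem_cubeEmbs _ _ _
  · intro p hp q hq hpq
    simp only [dif_pos (hg p hp), dif_pos (hg q hq)] at hpq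
    have h1 : p.1 = q.1 := by
      rw [← freeSet_cubeEmb p.2 p.1 (hg p hp), ← freeSet_cubeEmb q.2 q.1 (hg q hq), hpq]
    have h2 : p.2 = q.2 := by
      funext i
      by_cases hi : i ∈ p.1
      · rw [hfix p hp i hi, hfix q hq i (h1 ▸ hi)]
      · have := congrFun (congrFun hpq (fun _ => false)) i
        rwa [cubeEmb_apply_not_mem _ _ _ _ hi, cubeEmb_apply_not_mem _ _ _ _ (h1 ▸ hi)] at this
    exact Prod.ext h1 h2


lemma filter_card_eq_choose {N n : ℕ} (x : Fin n → Bool) :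
    ((cubeEmbs N n).filter fun φ => ∃ v, φ v = x).card = n.choose N := by
  classical
  have hpc : ((Finset.univ : Finset (Fin n)).powersetCard N).card = n.choose N := by
    rw [Finset.card_powersetCard, Finset.card_univ, Fintype.card_fin]
  rw [← hpc]
  refine Finset.card_bij (fun φ _ => freeSet φ) ?_ ?_ ?_
  · intro a ha
    exact Finset.mem_powersetCard.mpr
      ⟨Finset.subset_univ _, (recon a (Finset.mem_filter.mp ha).1).1⟩
  · intro a₁ ha₁ a₂ ha₂ heq
    obtain ⟨hmem₁, v₁, hv₁⟩ : a₁ ∈ cubeEmbs N n ∧ ∃ v, a₁ v = x := by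
      simpa [Finset.mem_filter] using ha₁
    obtain ⟨hmem₂, v₂, hv₂⟩ : a₂ ∈ cubeEmbs N n ∧ ∃ v, a₂ v = x := by
      simpa [Finset.mem_filter] using ha₂
    obtain ⟨h₁, e₁⟩ := recon a₁ hmem₁
    obtain ⟨h₂, e₂⟩ := recon a₂ hmem₂
    have k₁ : a₁ = cubeEmb x (freeSet a₁) h₁ := by
      conv_lhs => rw [e₁]
      refine cubeEmb_congr ?_
      intro i hi
      rw [← hv₁]
      conv_rhs => rw [e₁]
      rw [cubeEmb_apply_not_mem _ _ _ _ hi]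
    have k₂ : a₂ = cubeEmb x (freeSet a₂) h₂ := by
      conv_lhs => rw [e₂]
      refine cubeEmb_congr ?_
      intro i hi
      rw [← hv₂]
      conv_rhs => rw [e₂]
      rw [cubeEmb_apply_not_mem _ _ _ _ hi]
    rw [k₁, k₂]
    exact cubeEmb_set_congr x heq h₁ h₂
  · intro S hS
    obtain ⟨-, hSc⟩ := Finset.mem_powersetCard.mp hS
    refine ⟨cubeEmb x S hSc, ?_, freeSet_cubeEmb x S hSc⟩
    refine Finset.mem_filter.mpr ⟨mem_cubeEmbs _ _ _, ?_⟩
    have := (mem_image_cubeEmb_iff x S hSc x).mpr (fun i _ => rfl)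
    simpa [Finset.mem_image] using this

lemma choose_lb : ∀ {N n : ℕ}, 1 ≤ N → N ≤ n → n - N + 1 ≤ n.choose N := by
  intro N n hN hn
  induction n, hn using Nat.le_induction with
  | base => rw [Nat.choose_self]; omega
  | succ n hn ih =>
    rcases N with _ | K
    · omega
    rw [Nat.choose_succ_succ]
    have h1 : 1 ≤ n.choose K := Nat.choose_pos (by omega)
    simp only [Nat.succ_eq_add_one] at ih ⊢
    omega

lemma part2 {N : ℕ} (hN : 1 ≤ N) :
    Tendsto (fun n => ((cubeEmbs N n).card : ℝ) / (Fintype.card (Fin n → Bool) : ℝ))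
      atTop atTop := by
  have hlow : Tendsto (fun n : ℕ => (((n - N + 1 : ℕ) : ℝ)) / (2 ^ N : ℝ)) atTop atTop := by
    apply Tendsto.atTop_div_const (by positivity)
    exact tendsto_natCast_atTop_atTop.comp
      ((tendsto_add_atTop_nat 1).comp (tendsto_sub_atTop_nat N))
  refine tendsto_atTop_mono' atTop ?_ hlow
  filter_upwards [eventually_ge_atTop N] with n hn
  rw [Fintype.card_fun, Fintype.card_bool, Fintype.card_fin]
  rw [div_le_div_iff₀ (by positivity) (by positivity)]
  have h1 : (n - N + 1) * 2 ^ n ≤ (cubeEmbs N n).card * 2 ^ N := by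
    calc (n - N + 1) * 2 ^ n ≤ n.choose N * 2 ^ n :=
          Nat.mul_le_mul_right _ (choose_lb hN hn)
    _ = n.choose N * 2 ^ (n - N) * 2 ^ N := by
          rw [mul_assoc, ← pow_add]; congr 2; omega
    _ ≤ (cubeEmbs N n).card * 2 ^ N := Nat.mul_le_mul_right _ card_cubeEmbs_lb
  exact_mod_cast h1


lemma card_sets_containing {n N : ℕ} (i : Fin n) :
    ((((Finset.univ : Finset (Fin n)).powersetCard N)).filter fun S => i ∈ S).card
      ≤ (n - 1).choose (N - 1) := by
  have htarget : (((Finset.univ : Finset (Fin n)).erase i).powersetCard (N - 1)).card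
      = (n - 1).choose (N - 1) := by
    rw [Finset.card_powersetCard, Finset.card_erase_of_mem (Finset.mem_univ i),
      Finset.card_univ, Fintype.card_fin]
  rw [← htarget]
  refine Finset.card_le_card_of_injOn (fun S => S.erase i) ?_ ?_
  · intro S hS
    rw [Finset.mem_coe, Finset.mem_filter, Finset.mem_powersetCard] at hS
    refine Finset.mem_powersetCard.mpr ⟨?_, ?_⟩
    · intro j hj
      rw [Finset.mem_erase] at hj ⊢
      exact ⟨hj.1, Finset.mem_univ j⟩
    · rw [Finset.card_erase_of_mem hS.2, hS.1.2]
  · intro S hS S' hS' he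
    rw [Finset.mem_coe, Finset.mem_filter] at hS hS'
    rw [← Finset.insert_erase hS.2, ← Finset.insert_erase hS'.2]
    simp only at he
    rw [he]

lemma card_determined {n : ℕ} (A : Finset (Fin n)) (W : Finset (Fin n → Bool))
    (h : ∀ u ∈ W, ∀ u' ∈ W, (∀ i ∈ A, u i = u' i) → u = u') :
    W.card ≤ 2 ^ A.card := by
  have h2 : W.card ≤ (Finset.univ : Finset ({i // i ∈ A} → Bool)).card := by
    refine Finset.card_le_card_of_injOn (fun u j => u j.1) (fun _ _ => Finset.mem_univ _) ?_
    intro u hu u' hu' he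
    exact h u hu u' hu' (fun i hi => congrFun he ⟨i, hi⟩)
  refine h2.trans_eq ?_
  rw [Finset.card_univ, Fintype.card_fun, Fintype.card_bool, Fintype.card_coe]


lemma image_eq_of_recon {N n : ℕ} (φ : (Fin N → Bool) → (Fin n → Bool)) (hφ : φ ∈ cubeEmbs N n)
    {x : Fin n → Bool} (hx : x ∈ Finset.univ.image φ) :
    ∀ i ∉ freeSet φ, x i = φ (fun _ => false) i := by
  obtain ⟨h, e⟩ := recon φ hφ
  intro i hi
  rw [e] at hx
  exact (mem_image_cubeEmb_iff _ _ _ _).mp hx i hi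

lemma fiber_bound {N n : ℕ} (hN : 1 ≤ N) (φ₁ : (Fin N → Bool) → (Fin n → Bool))
    (hφ₁ : φ₁ ∈ cubeEmbs N n) :
    ((((cubeEmbs N n) ×ˢ (cubeEmbs N n)).filter (fun p =>
      1 < ((Finset.univ.image p.1) ∩ (Finset.univ.image p.2)).card ∧
      ((Finset.univ.image p.1) ∩ (Finset.univ.image p.2)).card
        < Fintype.card (Fin N → Bool))).filter
      (fun p => p.1 = φ₁)).card ≤ N * ((n - 1).choose (N - 1)) * 2 ^ (N - 1) := by
  classical
  obtain ⟨h₁, e₁⟩ := recon φ₁ hφ₁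
  set FS : Finset (Finset (Fin n)) :=
    ((Finset.univ : Finset (Fin n)).powersetCard N).filter
      (fun S₂ => (freeSet φ₁ ∩ S₂).Nonempty ∧ S₂ ≠ freeSet φ₁) with hFSdef
  set T : Finset (Finset (Fin n) × (Fin n → Bool)) :=
    FS.biUnion (fun S₂ => ({S₂} : Finset (Finset (Fin n))) ×ˢ
      (Finset.univ.filter fun u₂ =>
        (∀ i ∈ S₂, u₂ i = false) ∧
        ∀ i, i ∉ freeSet φ₁ → i ∉ S₂ → u₂ i = φ₁ (fun _ => false) i)) with hTdef
  have step1 : ((((cubeEmbs N n) ×ˢ (cubeEmbs N n)).filter (fun p =>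
      1 < ((Finset.univ.image p.1) ∩ (Finset.univ.image p.2)).card ∧
      ((Finset.univ.image p.1) ∩ (Finset.univ.image p.2)).card
        < Fintype.card (Fin N → Bool))).filter
      (fun p => p.1 = φ₁)).card ≤ T.card := by
    refine Finset.card_le_card_of_injOn
      (fun p => (freeSet p.2, p.2 (fun _ => false))) ?_ ?_
    · intro p hp
      rw [Finset.mem_coe, Finset.mem_filter, Finset.mem_filter, Finset.mem_product] at hp
      obtain ⟨⟨⟨hp1, hp2⟩, hc1, hc2⟩, hpfst⟩ := hp
      rw [hpfst] at hc1 hc2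
      obtain ⟨h₂, e₂⟩ := recon p.2 hp2
      -- a common point
      obtain ⟨x, hx⟩ := Finset.card_pos.mp (by omega :
        0 < ((Finset.univ.image φ₁) ∩ (Finset.univ.image p.2)).card)
      rw [Finset.mem_inter] at hx
      have hx1 : ∀ i ∉ freeSet φ₁, x i = φ₁ (fun _ => false) i :=
        image_eq_of_recon φ₁ hφ₁ hx.1
      have hx2 : ∀ i ∉ freeSet p.2, x i = p.2 (fun _ => false) i :=
        image_eq_of_recon p.2 hp2 hx.2
      -- freeSet p.2 ≠ freeSet φ₁
      have hne : freeSet p.2 ≠ freeSet φ₁ := by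
        intro heq
        have hkey : p.2 = φ₁ := by
          have k₁ : φ₁ = cubeEmb x (freeSet φ₁) h₁ := by
            conv_lhs => rw [e₁]
            exact cubeEmb_congr (fun i hi => (hx1 i hi).symm)
          have k₂ : p.2 = cubeEmb x (freeSet p.2) h₂ := by
            conv_lhs => rw [e₂]
            exact cubeEmb_congr (fun i hi => (hx2 i hi).symm)
          rw [k₁, k₂]
          exact cubeEmb_set_congr x heq h₂ h₁
        rw [hkey, Finset.inter_self,
          Finset.card_image_of_injective _ (by rw [e₁]; exact cubeEmb_inj _ _ _),
          Finset.card_univ] at hc2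
        exact lt_irrefl _ hc2
      -- nonempty intersection
      have hinter : (freeSet φ₁ ∩ freeSet p.2).Nonempty := by
        by_contra hcon
        rw [Finset.not_nonempty_iff_eq_empty] at hcon
        obtain ⟨y, hy, z, hz, hyz⟩ := Finset.one_lt_card.mp hc1
        rw [Finset.mem_inter] at hy hz
        have hy1 := image_eq_of_recon φ₁ hφ₁ hy.1
        have hy2 := image_eq_of_recon p.2 hp2 hy.2
        have hz1 := image_eq_of_recon φ₁ hφ₁ hz.1
        have hz2 := image_eq_of_recon p.2 hp2 hz.2
        refine hyz (funext fun i => ?_)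
        by_cases hi : i ∈ freeSet φ₁
        · have hi2 : i ∉ freeSet p.2 := fun h => by
            have : i ∈ freeSet φ₁ ∩ freeSet p.2 := Finset.mem_inter.mpr ⟨hi, h⟩
            simp [hcon] at this
          rw [hy2 i hi2, hz2 i hi2]
        · rw [hy1 i hi, hz1 i hi]
      -- membership in T
      have hfalse : ∀ i ∈ freeSet p.2, p.2 (fun _ => false) i = false := by
        intro i hi
        conv_lhs => rw [e₂]
        rw [cubeEmb_apply_mem _ _ _ _ hi]
      rw [Finset.mem_coe, hTdef, Finset.mem_biUnion]
      refine ⟨freeSet p.2, ?_, ?_⟩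
      · rw [Finset.mem_filter, Finset.mem_powersetCard]
        exact ⟨⟨Finset.subset_univ _, h₂⟩, hinter, hne⟩
      · rw [Finset.mem_product, Finset.mem_singleton, Finset.mem_filter]
        refine ⟨rfl, Finset.mem_univ _, hfalse, ?_⟩
        intro i hi1 hi2
        show p.2 (fun _ => false) i = φ₁ (fun _ => false) i
        rw [← hx2 i hi2, hx1 i hi1]
    · intro p hp q hq he
      simp only [Prod.mk.injEq] at he
      rw [Finset.mem_coe, Finset.mem_filter, Finset.mem_filter, Finset.mem_product] at hp hq
      obtain ⟨h₂p, e₂p⟩ := recon p.2 hp.1.1.2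
      obtain ⟨h₂q, e₂q⟩ := recon q.2 hq.1.1.2
      have hsnd : p.2 = q.2 := by
        rw [e₂p, e₂q, he.2]
        exact cubeEmb_set_congr _ he.1 h₂p h₂q
      exact Prod.ext (hp.2.trans hq.2.symm) hsnd
  refine step1.trans ?_
  -- bound T.card
  have step2 : T.card ≤ FS.card * 2 ^ (N - 1) := by
    refine (Finset.card_biUnion_le).trans ?_
    rw [← smul_eq_mul]
    refine Finset.sum_le_card_nsmul _ _ _ ?_
    intro S₂ hS₂
    rw [hFSdef, Finset.mem_filter, Finset.mem_powersetCard] at hS₂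
    obtain ⟨⟨-, hS₂c⟩, hinter, -⟩ := hS₂
    rw [Finset.card_product, Finset.card_singleton, one_mul]
    have hb : (Finset.univ.filter fun u₂ : Fin n → Bool =>
        (∀ i ∈ S₂, u₂ i = false) ∧
        ∀ i, i ∉ freeSet φ₁ → i ∉ S₂ → u₂ i = φ₁ (fun _ => false) i).card
        ≤ 2 ^ (freeSet φ₁ \ S₂).card := by
      refine card_determined _ _ ?_
      intro u hu u' hu' hagree
      rw [Finset.mem_filter] at hu hu'
      funext i
      by_cases hi2 : i ∈ S₂
      · rw [hu.2.1 i hi2, hu'.2.1 i hi2]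
      · by_cases hi1 : i ∈ freeSet φ₁
        · exact hagree i (Finset.mem_sdiff.mpr ⟨hi1, hi2⟩)
        · rw [hu.2.2 i hi1 hi2, hu'.2.2 i hi1 hi2]
    refine hb.trans (Nat.pow_le_pow_right (by norm_num) ?_)
    have hc := Finset.card_sdiff_add_card_inter (freeSet φ₁) S₂
    have hpos : 0 < (freeSet φ₁ ∩ S₂).card := Finset.card_pos.mpr hinter
    have key : (freeSet φ₁ \ S₂).card + (freeSet φ₁ ∩ S₂).card = N := hc.trans h₁
    have hlt : (freeSet φ₁ \ S₂).card < N :=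
      lt_of_lt_of_le (Nat.lt_add_of_pos_right hpos) (le_of_eq key)
    exact Nat.le_sub_one_of_lt hlt
  have step3 : FS.card ≤ N * (n - 1).choose (N - 1) := by
    have hsub : FS ⊆ (freeSet φ₁).biUnion (fun i =>
        (((Finset.univ : Finset (Fin n)).powersetCard N)).filter fun S => i ∈ S) := by
      intro S₂ hS₂
      rw [hFSdef, Finset.mem_filter] at hS₂
      obtain ⟨hpc, ⟨i, hi⟩, -⟩ := hS₂
      rw [Finset.mem_inter] at hi
      exact Finset.mem_biUnion.mpr ⟨i, hi.1, Finset.mem_filter.mpr ⟨hpc, hi.2⟩⟩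
    refine (Finset.card_le_card hsub).trans ?_
    refine (Finset.card_biUnion_le).trans ?_
    calc ∑ i ∈ freeSet φ₁, ((((Finset.univ : Finset (Fin n)).powersetCard N)).filter
          fun S => i ∈ S).card
        ≤ ∑ _i ∈ freeSet φ₁, (n - 1).choose (N - 1) :=
          Finset.sum_le_sum (fun i _ => card_sets_containing i)
      _ = N * (n - 1).choose (N - 1) := by rw [Finset.sum_const, h₁, smul_eq_mul]
  calc T.card ≤ FS.card * 2 ^ (N - 1) := step2
    _ ≤ N * (n - 1).choose (N - 1) * 2 ^ (N - 1) :=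
        Nat.mul_le_mul_right _ step3

lemma interCount_le {N n : ℕ} (hN : 1 ≤ N) :
    interCountF (cubeEmbs N n)
      ≤ (cubeEmbs N n).card * (N * ((n - 1).choose (N - 1)) * 2 ^ (N - 1)) := by
  classical
  rw [interCountF]
  rw [Finset.card_eq_sum_card_fiberwise (f := fun p => p.1) (t := cubeEmbs N n)
    (fun p hp => (Finset.mem_product.mp (Finset.mem_filter.mp hp).1).1)]
  rw [← smul_eq_mul]
  refine Finset.sum_le_card_nsmul _ _ _ ?_
  intro φ₁ hφ₁
  exact fiber_bound hN φ₁ hφ₁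


lemma key_ineq {N n : ℕ} (hN : 1 ≤ N) (hn : N ≤ n) (hn1 : 1 ≤ n) :
    2 ^ n * interCountF (cubeEmbs N n) * n
      ≤ (N ^ 2 * 2 ^ (3 * N - 1)) * (cubeEmbs N n).card ^ 2 := by
  have hid : n * (n - 1).choose (N - 1) = n.choose N * N := by
    have h := Nat.add_one_mul_choose_eq (n - 1) (N - 1)
    simp only [Nat.succ_eq_add_one, Nat.sub_add_cancel hn1, Nat.sub_add_cancel hN] at h
    exact h
  have hpow : 2 ^ n * 2 ^ n * 2 ^ (N - 1)
      = 2 ^ (n - N) * 2 ^ (n - N) * 2 ^ (3 * N - 1) := by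
    rw [← pow_add, ← pow_add, ← pow_add, ← pow_add]
    congr 1
    omega
  calc 2 ^ n * interCountF (cubeEmbs N n) * n
      ≤ 2 ^ n * ((cubeEmbs N n).card * (N * ((n - 1).choose (N - 1)) * 2 ^ (N - 1))) * n :=
        Nat.mul_le_mul_right n (Nat.mul_le_mul_left _ (interCount_le hN))
    _ ≤ 2 ^ n * ((n.choose N * 2 ^ n) * (N * ((n - 1).choose (N - 1)) * 2 ^ (N - 1))) * n :=
        Nat.mul_le_mul_right n
          (Nat.mul_le_mul_left _ (Nat.mul_le_mul_right _ (card_cubeEmbs_ub N n)))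
    _ = (N * (n * (n - 1).choose (N - 1))) * (n.choose N * (2 ^ n * 2 ^ n * 2 ^ (N - 1))) := by
        ring
    _ = (N * (n.choose N * N)) *
          (n.choose N * (2 ^ (n - N) * 2 ^ (n - N) * 2 ^ (3 * N - 1))) := by
        rw [hid, hpow]
    _ = (N ^ 2 * 2 ^ (3 * N - 1)) * (n.choose N * 2 ^ (n - N)) ^ 2 := by ring
    _ ≤ (N ^ 2 * 2 ^ (3 * N - 1)) * (cubeEmbs N n).card ^ 2 :=
        Nat.mul_le_mul_left _ (Nat.pow_le_pow_left card_cubeEmbs_lb 2)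

lemma part3 {N : ℕ} (hN : 1 ≤ N) :
    Tendsto (fun n =>
      ((Fintype.card (Fin n → Bool) : ℝ) * (interCountF (cubeEmbs N n) : ℝ)) /
        ((cubeEmbs N n).card : ℝ) ^ 2) atTop (nhds 0) := by
  have hc : Tendsto (fun n : ℕ => ((N ^ 2 * 2 ^ (3 * N - 1) : ℕ) : ℝ) / n) atTop (nhds 0) :=
    tendsto_const_div_atTop_nhds_zero_nat _
  refine tendsto_of_tendsto_of_tendsto_of_le_of_le' tendsto_const_nhds hc ?_ ?_
  · filter_upwards with n
    positivity
  · filter_upwards [eventually_ge_atTop N, eventually_ge_atTop 1] with n hn hn1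
    have hBpos : 0 < (cubeEmbs N n).card :=
      lt_of_lt_of_le (Nat.mul_pos (Nat.choose_pos hn) (Nat.pow_pos (by norm_num)))
        card_cubeEmbs_lb
    have hBpos' : (0 : ℝ) < ((cubeEmbs N n).card : ℝ) ^ 2 := by positivity
    have hnpos : (0 : ℝ) < (n : ℝ) := by exact_mod_cast hn1
    rw [div_le_div_iff₀ hBpos' hnpos, Fintype.card_fun, Fintype.card_bool, Fintype.card_fin]
    exact_mod_cast key_ineq hN hn hn1

/-- **Theorem (the hypercube is a good homogeneous ssee).**
Every `φ_{u,S}` is injective; `|Q_n| → ∞`; for every `N ≥ 1`,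
`|binom(Q_n,Q_N)|/|Q_n| → ∞` and `|Q_n|·I(N,n)/|binom(Q_n,Q_N)|² → 0`; and for all
`N ≤ n` every `x ∈ Q_n` lies in the same strictly positive number of images
`φ(Q_N)`. -/
theorem hypercube_good_homogeneous_ssee :
    (∀ (N n : ℕ), N ≤ n → ∀ (u : Fin n → Bool) (S : Finset (Fin n))
      (hS : S.card = N), Function.Injective (cubeEmb u S hS)) ∧
    Tendsto (fun n => Fintype.card (Fin n → Bool)) atTop atTop ∧
    (∀ N : ℕ, 1 ≤ N →
      Tendsto (fun n => ((cubeEmbs N n).card : ℝ) / (Fintype.card (Fin n → Bool) : ℝ))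
        atTop atTop) ∧
    (∀ N : ℕ, 1 ≤ N →
      Tendsto (fun n =>
        ((Fintype.card (Fin n → Bool) : ℝ) * (interCountF (cubeEmbs N n) : ℝ)) /
          ((cubeEmbs N n).card : ℝ) ^ 2) atTop (nhds 0)) ∧
    (∀ N n : ℕ, N ≤ n → ∃ m : ℕ, 0 < m ∧ ∀ x : Fin n → Bool,
      ((cubeEmbs N n).filter (fun φ => ∃ v, φ v = x)).card = m) := by
  refine ⟨fun N n _ u S hS => cubeEmb_inj u S hS, ?_, fun N hN => part2 hN,
    fun N hN => part3 hN, fun N n hNn => ⟨n.choose N, Nat.choose_pos hNn,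
      fun x => filter_card_eq_choose x⟩⟩
  have : (fun n => Fintype.card (Fin n → Bool)) = fun n => 2 ^ n := by
    funext n
    rw [Fintype.card_fun, Fintype.card_bool, Fintype.card_fin]
  rw [this]
  exact tendsto_pow_atTop_atTop_of_one_lt (by norm_num)


end
end
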